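/- arXiv:1006.0706 — 3 statements merged into one kernel-verified Lean document; each statement's English description precedes it below -/
import Mathlib

section
/- Let R be a TRS, u a non-constant ground proper subterm of some right-hand side of R, c a fresh constant, and R' = {c → u} ∪ { l → NF_{u→c}(r) : l → r ∈ R } (where NF_{u→c}(r) replaces all occurrences of u in r by c). Then for any permutative theory E, R/E is terminating if and only if R'/E is terminating. -/
/-- First-order terms over function symbols `F` and variables `V`. -/
inductive Tm (F V : Type) : Type
  | var : V → Tm F V
  | app : F → List (Tm F V) → Tm F V

namespace Tm

variable {F V : Type}

/-- Height of a term: 0 for variables and constants. -/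
def height : Tm F V → ℕ
  | var _ => 0
  | app _ ts => ts.attach.foldr (fun t m => max (height t.1 + 1) m) 0
decreasing_by all_goals (simp_wf; have := List.sizeOf_lt_of_mem t.2; omega)

/-- Size (number of positions) of a term. -/
def size : Tm F V → ℕ
  | var _ => 1
  | app _ ts => 1 + (ts.attach.map (fun t => size t.1)).sum
decreasing_by all_goals (simp_wf; have := List.sizeOf_lt_of_mem t.2; omega)

/-- Apply a substitution. -/
def subst (σ : V → Tm F V) : Tm F V → Tm F V
  | var x => σ x
  | app f ts => app f (ts.attach.map (fun t => subst σ t.1))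
decreasing_by all_goals (simp_wf; have := List.sizeOf_lt_of_mem t.2; omega)

/-- List of variable occurrences. -/
def varList : Tm F V → List V
  | var x => [x]
  | app _ ts => (ts.attach.map (fun t => varList t.1)).flatten
decreasing_by all_goals (simp_wf; have := List.sizeOf_lt_of_mem t.2; omega)

/-- List of function-symbol occurrences. -/
def symList : Tm F V → List F
  | var _ => []
  | app f ts => f :: (ts.attach.map (fun t => symList t.1)).flatten
decreasing_by all_goals (simp_wf; have := List.sizeOf_lt_of_mem t.2; omega)

/-- The subterm at a position (positions are lists of argument indices). -/
def subAt : Tm F V → List ℕ → Option (Tm F V)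
  | t, [] => some t
  | var _, _ :: _ => none
  | app _ ts, i :: p => match ts[i]? with
      | some u => subAt u p
      | none => none

/-- Replace the subterm at a position. -/
def replAt : Tm F V → List ℕ → Tm F V → Option (Tm F V)
  | _, [], s => some s
  | var _, _ :: _, _ => none
  | app f ts, i :: p, s => match ts[i]? with
      | some u => (replAt u p s).map (fun u' => app f (ts.set i u'))
      | none => none

/-- `p` is a position of `t`. -/
def IsPos (t : Tm F V) (p : List ℕ) : Prop := (t.subAt p).isSome

/-- A term is a constant if it is a nullary function application. -/
def IsConst (t : Tm F V) : Prop := ∃ f : F, t = app f []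

def Ground (t : Tm F V) : Prop := t.varList = []

/-- A term is linear if each variable occurs at most once. -/
def Linear (t : Tm F V) : Prop := t.varList.Nodup

/-- A term is flat if its height is at most 1. -/
def Flat (t : Tm F V) : Prop := t.height ≤ 1

/-- A term is shallow if all variables occur at depth at most 1. -/
def Shallow (t : Tm F V) : Prop :=
  ∀ (p : List ℕ) (x : V), t.subAt p = some (var x) → p.length ≤ 1

end Tm

/-- A rewrite rule. -/
structure Rule (F V : Type) where
  lhs : Tm F V
  rhs : Tm F V

namespace Rule

variable {F V : Type}

/-- Standard well-formedness: the lhs is not a variable and variables of the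
rhs occur in the lhs. -/
def WF (r : Rule F V) : Prop :=
  (∀ x : V, r.lhs ≠ Tm.var x) ∧ ∀ x ∈ r.rhs.varList, x ∈ r.lhs.varList

def RightFlat (r : Rule F V) : Prop := r.rhs.Flat
def RightLinear (r : Rule F V) : Prop := r.rhs.Linear
def RightShallow (r : Rule F V) : Prop := r.rhs.Shallow
def FlatRule (r : Rule F V) : Prop := r.lhs.Flat ∧ r.rhs.Flat
def ShallowRule (r : Rule F V) : Prop := r.lhs.Shallow ∧ r.rhs.Shallow
def Collapsing (r : Rule F V) : Prop := ∃ x : V, r.rhs = Tm.var x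

/-- A permutative rule: linear, flat, height-preserving and variable-preserving. -/
def Permutative (r : Rule F V) : Prop :=
  r.WF ∧ r.lhs.Linear ∧ r.rhs.Linear ∧ r.lhs.Flat ∧ r.rhs.Flat ∧
    r.lhs.height = r.rhs.height ∧ ∀ x : V, x ∈ r.lhs.varList ↔ x ∈ r.rhs.varList

end Rule

/-- A permutative theory: a symmetric set of permutative rules. -/
def PermutativeTheory {F V : Type} (E : Set (Rule F V)) : Prop :=
  (∀ r ∈ E, r.Permutative) ∧ ∀ r ∈ E, (⟨r.rhs, r.lhs⟩ : Rule F V) ∈ E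

section Rewriting

variable {F V : Type}

/-- One rewrite step with rule `l → r` at position `p` using substitution `σ`. -/
def RewWith (l r : Tm F V) (p : List ℕ) (σ : V → Tm F V) (s t : Tm F V) : Prop :=
  s.subAt p = some (l.subst σ) ∧ s.replAt p (r.subst σ) = some t

/-- One rewrite step with TRS `R` at position `p`. -/
def RewAt (R : Set (Rule F V)) (p : List ℕ) (s t : Tm F V) : Prop :=
  ∃ r ∈ R, ∃ σ : V → Tm F V, RewWith r.lhs r.rhs p σ s t

/-- One rewrite step with TRS `R`. -/
def Rew (R : Set (Rule F V)) (s t : Tm F V) : Prop := ∃ p, RewAt R p s t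

/-- Reachability: reflexive-transitive closure of one-step rewriting. -/
def Reach (R : Set (Rule F V)) : Tm F V → Tm F V → Prop :=
  Relation.ReflTransGen (Rew R)

/-- One rewrite step with `R` modulo `E` : `s →E* · →R · →E* t`. -/
def RewMod (R E : Set (Rule F V)) (s t : Tm F V) : Prop :=
  ∃ u v, Reach E s u ∧ Rew R u v ∧ Reach E v t

/-- `R/E` is terminating from `s`. -/
def TerminatingFrom (R E : Set (Rule F V)) (s : Tm F V) : Prop :=
  ¬ ∃ f : ℕ → Tm F V, f 0 = s ∧ ∀ n, RewMod R E (f n) (f (n + 1))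

/-- `R/E` is terminating. -/
def Terminating (R E : Set (Rule F V)) : Prop :=
  ¬ ∃ f : ℕ → Tm F V, ∀ n, RewMod R E (f n) (f (n + 1))

/-- `t` is reachable from some constant. -/
def FromConst (R : Set (Rule F V)) (t : Tm F V) : Prop :=
  ∃ f : F, Reach R (Tm.app f []) t

/-- The measure `‖t‖`: number of positions of `t` whose subterm is not reachable
from a constant. -/
noncomputable def meas (R : Set (Rule F V)) (t : Tm F V) : ℕ :=
  Nat.card {p : List ℕ // ∃ u, t.subAt p = some u ∧ ¬ FromConst R u}

/-- `t` is a normal form w.r.t. `R/E`. -/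
def NFMod (R E : Set (Rule F V)) (t : Tm F V) : Prop := ¬ ∃ t', RewMod R E t t'

/-- `t` is `R`-irreducible. -/
def NF (R : Set (Rule F V)) (t : Tm F V) : Prop := ¬ ∃ t', Rew R t t'

/-- Innermost rewrite step with `R` (plain rewriting): all proper subterms of the
redex are irreducible. -/
def IRew (R : Set (Rule F V)) (s t : Tm F V) : Prop :=
  ∃ p, RewAt R p s t ∧
    ∀ (q : List ℕ) (w : Tm F V), q ≠ [] → s.subAt (p ++ q) = some w → NF R w

/-- Innermost rewrite step with `R` modulo `E`. -/
def IRewMod (R E : Set (Rule F V)) (s t : Tm F V) : Prop :=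
  ∃ u v, ∃ p : List ℕ, Reach E s u ∧ RewAt R p u v ∧ Reach E v t ∧
    ∀ (q : List ℕ) (w : Tm F V), q ≠ [] → u.subAt (p ++ q) = some w → NFMod R E w

/-- Innermost termination of `R/E`. -/
def ITerminating (R E : Set (Rule F V)) : Prop :=
  ¬ ∃ f : ℕ → Tm F V, ∀ n, IRewMod R E (f n) (f (n + 1))

end Rewriting

section Marking

variable {F V : Type}

/-- A derivation of length `n` with explicit rules, positions and substitutions. -/
def IsDeriv (R : Set (Rule F V)) (n : ℕ) (s : ℕ → Tm F V) (rl : ℕ → Rule F V)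
    (pp : ℕ → List ℕ) (sb : ℕ → V → Tm F V) : Prop :=
  ∀ i < n, rl i ∈ R ∧ RewWith (rl i).lhs (rl i).rhs (pp i) (sb i) (s i) (s (i + 1))

/-- `p'` is strictly below `p̄` : `p̄` is a proper prefix of `p'`. -/
def StrictBelow (pbar p : List ℕ) : Prop := ∃ q, q ≠ [] ∧ p = pbar ++ q

/-- A marking of a derivation. -/
def IsMarking (n : ℕ) (s : ℕ → Tm F V) (rl : ℕ → Rule F V)
    (pp : ℕ → List ℕ) (M : ℕ → List ℕ → Tm F V) : Prop :=
  (∀ p t, (s 0).subAt p = some t → M 0 p = t) ∧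
  ∀ i < n,
    (∀ p, (s (i + 1)).IsPos p → ¬ StrictBelow (pp i) p → M (i + 1) p = M i p) ∧
    (∀ (j : ℕ) (u : Tm F V), (rl i).rhs.subAt [j] = some u → u.IsConst →
        M (i + 1) (pp i ++ [j]) = u) ∧
    (∀ (j : ℕ) (p₁ : List ℕ) (x : V), (rl i).rhs.subAt [j] = some (Tm.var x) →
        (s (i + 1)).IsPos (pp i ++ j :: p₁) →
        ∃ q₀ : List ℕ, (rl i).lhs.subAt q₀ = some (Tm.var x) ∧
          M (i + 1) (pp i ++ j :: p₁) = M i (pp i ++ q₀ ++ p₁))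

end Marking

section WFSig

variable {F V : Type}

/-- Terms respecting the arity function. -/
inductive WFT (ar : F → ℕ) : Tm F V → Prop
  | var (x : V) : WFT ar (Tm.var x)
  | app (f : F) (ts : List (Tm F V)) : ts.length = ar f →
      (∀ t ∈ ts, WFT ar t) → WFT ar (Tm.app f ts)

end WFSig

open scoped Classical in
/-- Replace every occurrence of `u` in a term by `c`, i.e. `NF_{u→c}(·)`. -/
noncomputable def replAll {F V : Type} (u c : Tm F V) : Tm F V → Tm F V
  | Tm.var x => if (Tm.var x : Tm F V) = u then c else Tm.var x
  | Tm.app f ts =>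
    if (Tm.app f ts : Tm F V) = u then c
    else Tm.app f (ts.attach.map (fun t => replAll u c t.1))
decreasing_by all_goals (simp_wf; have := List.sizeOf_lt_of_mem t.2; omega)

/-! ## Auxiliary development -/

namespace Stmt16Aux

/-! ### Generic list lemmas -/

theorem lget_append {α : Type*} (l : List α) (a : α) (m : List α) :
    (l ++ a :: m)[l.length]? = some a := by
  induction l with
  | nil => rfl
  | cons x l ih => simpa using ih

theorem lset_append {α : Type*} (l : List α) (a b : α) (m : List α) :
    (l ++ a :: m).set l.length b = l ++ b :: m := by
  induction l with
  | nil => rfl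
  | cons x l ih => simpa using ih

theorem lset_of_get {α : Type*} : ∀ (l : List α) (i : ℕ) (a : α), l[i]? = some a →
    l.set i a = l
  | [], i, a, h => by simp at h
  | x :: l, 0, a, h => by simp_all
  | x :: l, (i+1), a, h => by
      simp only [List.getElem?_cons_succ] at h
      simp [lset_of_get l i a h]

theorem lmap_set {α β : Type*} (g : α → β) : ∀ (l : List α) (i : ℕ) (b : α),
    (l.set i b).map g = (l.map g).set i (g b)
  | [], _, _ => rfl
  | x :: l, 0, b => rfl
  | x :: l, (i+1), b => by simp [lmap_set g l i b]

theorem lget_map {α β : Type*} (g : α → β) : ∀ (l : List α) (i : ℕ),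
    (l.map g)[i]? = (l[i]?).map g
  | [], _ => rfl
  | x :: l, 0 => rfl
  | x :: l, (i+1) => lget_map g l i

theorem lsum_set (g : ℕ → ℕ) : True := trivial

theorem lsum_set' {α : Type*} (g : α → ℕ) : ∀ (l : List α) (i : ℕ) (a b : α),
    l[i]? = some a → ((l.set i b).map g).sum + g a = (l.map g).sum + g b
  | [], i, a, b, h => by simp at h
  | x :: l, 0, a, b, h => by
      simp only [List.getElem?_cons_zero, Option.some.injEq] at h
      subst h; simp; omega
  | x :: l, (i+1), a, b, h => by
      simp only [List.getElem?_cons_succ] at h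
      have := lsum_set' g l i a b h
      simp only [List.set, List.map, List.sum_cons]
      omega

/-! ### Termination vs well-foundedness -/

theorem no_chain_iff_wf {α : Type*} (r : α → α → Prop) :
    (¬ ∃ f : ℕ → α, ∀ n, r (f n) (f (n + 1))) ↔ WellFounded (Function.swap r) := by
  constructor
  · intro h
    by_contra hwf
    apply h
    have ⟨a, ha⟩ : ∃ a, ¬ Acc (Function.swap r) a := by
      by_contra h'
      push_neg at h'
      exact hwf ⟨h'⟩
    have step : ∀ x : {a // ¬ Acc (Function.swap r) a},
        ∃ y : {a // ¬ Acc (Function.swap r) a}, r x.1 y.1 := by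
      rintro ⟨x, hx⟩
      have : ¬ ∀ y, Function.swap r y x → Acc (Function.swap r) y := fun hy => hx (Acc.intro x hy)
      push_neg at this
      obtain ⟨y, hy1, hy2⟩ := this
      exact ⟨⟨y, hy2⟩, hy1⟩
    choose g hg using step
    refine ⟨fun n => (g^[n] ⟨a, ha⟩).1, fun n => ?_⟩
    show r (g^[n] ⟨a, ha⟩).1 (g^[n+1] ⟨a, ha⟩).1
    rw [Function.iterate_succ_apply']
    exact hg _
  · rintro hwf ⟨f, hf⟩
    have key : ∀ a, Acc (Function.swap r) a → ∀ g : ℕ → α, g 0 = a →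
        ¬ (∀ n, r (g n) (g (n + 1))) := by
      intro a hacc
      induction hacc with
      | intro a _ ih =>
        intro g hg0 hg
        exact ih (g 1) (by rw [← hg0] at *; exact hg 0) (fun n => g (n + 1)) rfl
          (fun n => hg (n + 1))
    exact key (f 0) (hwf.apply _) f rfl hf

theorem flatten_chain {α : Type*} {r : α → α → Prop} (f : ℕ → α)
    (hf : ∀ n, Relation.TransGen r (f n) (f (n + 1))) :
    ∃ g : ℕ → α, ∀ n, r (g n) (g (n + 1)) := by
  by_contra h
  rw [no_chain_iff_wf] at h
  have h2 : WellFounded (Relation.TransGen (Function.swap r)) := h.transGen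
  have h3 : WellFounded (Function.swap (Relation.TransGen r)) := by
    have : Relation.TransGen (Function.swap r) = Function.swap (Relation.TransGen r) := by
      funext a b
      exact propext Relation.transGen_swap
    rwa [this] at h2
  rw [← no_chain_iff_wf] at h3
  exact h3 ⟨f, hf⟩

end Stmt16Aux

namespace Stmt16Aux
open Tm

variable {F V : Type}

theorem tm_ind {P : Tm F V → Prop} (hv : ∀ x, P (var x))
    (ha : ∀ f ts, (∀ t ∈ ts, P t) → P (app f ts)) : ∀ t, P t
  | var x => hv x
  | app f ts => ha f ts (fun t _ => tm_ind hv ha t)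
decreasing_by all_goals (simp_wf; have := List.sizeOf_lt_of_mem (by assumption); omega)

theorem subst_var (σ : V → Tm F V) (x : V) : subst σ (var x) = σ x := by rw [subst]

theorem subst_app (σ : V → Tm F V) (f : F) (ts : List (Tm F V)) :
    subst σ (app f ts) = app f (ts.map (subst σ)) := by
  rw [subst]; simp [List.map_attach_eq_pmap]

theorem varList_var (x : V) : (var x : Tm F V).varList = [x] := by rw [varList]

theorem varList_app (f : F) (ts : List (Tm F V)) :
    (app f ts).varList = (ts.map varList).flatten := by
  rw [varList]; simp [List.map_attach_eq_pmap]

theorem symList_var (x : V) : (var x : Tm F V).symList = [] := by rw [symList]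

theorem symList_app (f : F) (ts : List (Tm F V)) :
    (app f ts).symList = f :: (ts.map symList).flatten := by
  rw [symList]; simp [List.map_attach_eq_pmap]

theorem replAll_eq {u : Tm F V} (c0 : Tm F V) {t : Tm F V} (h : t = u) :
    replAll u c0 t = c0 := by
  cases t <;> rw [replAll] <;> rw [if_pos h]

theorem replAll_var_ne {u : Tm F V} (c0 : Tm F V) {x : V} (h : (var x : Tm F V) ≠ u) :
    replAll u c0 (var x) = var x := by
  rw [replAll, if_neg h]

theorem replAll_app_ne {u : Tm F V} (c0 : Tm F V) {f : F} {ts : List (Tm F V)}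
    (h : app f ts ≠ u) :
    replAll u c0 (app f ts) = app f (ts.map (replAll u c0)) := by
  rw [replAll, if_neg h]; simp [List.map_attach_eq_pmap]

theorem ground_ne_var {u : Tm F V} (h : u.Ground) (x : V) : u ≠ var x := by
  intro he; rw [he] at h; simp [Ground, varList_var] at h

theorem ground_app {f : F} {ts : List (Tm F V)} (h : (app f ts).Ground) :
    ∀ t ∈ ts, t.Ground := by
  intro t ht
  rw [Ground] at h ⊢
  rw [varList_app] at h
  rw [List.eq_nil_iff_forall_not_mem]
  intro x hx
  have : x ∈ (ts.map varList).flatten := by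
    rw [List.mem_flatten]
    exact ⟨t.varList, List.mem_map_of_mem ht, hx⟩
  rw [h] at this; exact absurd this List.not_mem_nil

theorem subst_ground {t : Tm F V} (h : t.Ground) (σ : V → Tm F V) : subst σ t = t := by
  induction t using tm_ind with
  | hv x => exact absurd rfl (ground_ne_var h x)
  | ha f ts ih =>
    rw [subst_app]
    congr 1
    conv_rhs => rw [← List.map_id ts]
    exact List.map_congr_left (fun t ht => ih t ht (ground_app h t ht))

/-! ### subAt / replAt toolkit -/

theorem subAt_nil (t : Tm F V) : t.subAt [] = some t := by rw [Tm.subAt]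

theorem subAt_cons_eq {ts : List (Tm F V)} {i : ℕ} {w : Tm F V} (h : ts[i]? = some w)
    (f : F) (p : List ℕ) : (app f ts).subAt (i :: p) = w.subAt p := by
  rw [subAt, h]

theorem subAt_cons_elim {s : Tm F V} {i : ℕ} {p : List ℕ} {w : Tm F V}
    (h : s.subAt (i :: p) = some w) :
    ∃ f ts w₀, s = app f ts ∧ ts[i]? = some w₀ ∧ w₀.subAt p = some w := by
  cases s with
  | var x => rw [subAt] at h; exact absurd h (by simp)
  | app f ts =>
    rw [subAt] at h
    split at h
    · next w₀ hg => exact ⟨f, ts, w₀, rfl, hg, h⟩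
    · exact absurd h (by simp)

theorem replAt_nil (t v : Tm F V) : t.replAt [] v = some v := by rw [Tm.replAt]

theorem replAt_cons_eq {ts : List (Tm F V)} {i : ℕ} {w : Tm F V} (h : ts[i]? = some w)
    (f : F) (p : List ℕ) (v : Tm F V) :
    (app f ts).replAt (i :: p) v = (w.replAt p v).map (fun w' => app f (ts.set i w')) := by
  rw [replAt, h]

theorem replAt_cons_elim {s : Tm F V} {i : ℕ} {p : List ℕ} {v t : Tm F V}
    (h : s.replAt (i :: p) v = some t) :
    ∃ f ts w₀ w₁, s = app f ts ∧ ts[i]? = some w₀ ∧ w₀.replAt p v = some w₁ ∧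
      t = app f (ts.set i w₁) := by
  cases s with
  | var x => rw [replAt] at h; exact absurd h (by simp)
  | app f ts =>
    rw [replAt] at h
    split at h
    · next w₀ hg =>
      cases hr : w₀.replAt p v with
      | none => rw [hr] at h; exact absurd h (by simp)
      | some w₁ =>
        rw [hr] at h
        injection h with h
        exact ⟨f, ts, w₀, w₁, rfl, hg, hr, h.symm⟩
    · exact absurd h (by simp)

theorem replAt_of_subAt : ∀ {p : List ℕ} {s w : Tm F V}, s.subAt p = some w →
    ∀ v, ∃ t, s.replAt p v = some t
  | [], s, w, _, v => ⟨v, replAt_nil s v⟩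
  | i :: p, s, w, h, v => by
    obtain ⟨f, ts, w₀, rfl, hg, hsub⟩ := subAt_cons_elim h
    obtain ⟨t₀, ht₀⟩ := replAt_of_subAt hsub v
    exact ⟨app f (ts.set i t₀), by rw [replAt_cons_eq hg, ht₀]; rfl⟩

theorem subAt_replAt : ∀ {p : List ℕ} {s v t : Tm F V}, s.replAt p v = some t →
    t.subAt p = some v
  | [], s, v, t, h => by rw [replAt_nil] at h; cases h; exact subAt_nil v
  | i :: p, s, v, t, h => by
    obtain ⟨f, ts, w₀, w₁, rfl, hg, hr, rfl⟩ := replAt_cons_elim h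
    have hg' : (ts.set i w₁)[i]? = some w₁ := by
      have hi : i < ts.length := by
        by_contra hlt
        rw [List.getElem?_eq_none_iff.2 (by omega)] at hg; exact absurd hg (by simp)
      rw [List.getElem?_set_self']
      simp [List.getElem?_eq_getElem hi]
    rw [subAt_cons_eq hg']
    exact subAt_replAt hr

theorem replAt_replAt : ∀ {p : List ℕ} {s a t : Tm F V}, s.replAt p a = some t →
    ∀ b, t.replAt p b = s.replAt p b
  | [], s, a, t, h, b => by rw [replAt_nil] at h; cases h; rw [replAt_nil, replAt_nil]
  | i :: p, s, a, t, h, b => by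
    obtain ⟨f, ts, w₀, w₁, rfl, hg, hr, rfl⟩ := replAt_cons_elim h
    have hi : i < ts.length := by
      by_contra hlt
      rw [List.getElem?_eq_none_iff.2 (by omega)] at hg; exact absurd hg (by simp)
    have hg' : (ts.set i w₁)[i]? = some w₁ := by
      rw [List.getElem?_set_self']
      simp [List.getElem?_eq_getElem hi]
    rw [replAt_cons_eq hg', replAt_cons_eq hg, replAt_replAt hr b]
    cases w₀.replAt p b <;> simp [List.set_set]

theorem replAt_self : ∀ {p : List ℕ} {s w : Tm F V}, s.subAt p = some w →
    s.replAt p w = some s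
  | [], s, w, h => by rw [subAt_nil] at h; cases h; exact replAt_nil s s
  | i :: p, s, w, h => by
    obtain ⟨f, ts, w₀, rfl, hg, hsub⟩ := subAt_cons_elim h
    rw [replAt_cons_eq hg, replAt_self hsub]
    simp [lset_of_get ts i w₀ hg]

theorem subAt_append : ∀ {p : List ℕ} {s w : Tm F V}, s.subAt p = some w →
    ∀ q, s.subAt (p ++ q) = w.subAt q
  | [], s, w, h, q => by rw [subAt_nil] at h; cases h; rw [List.nil_append]
  | i :: p, s, w, h, q => by
    obtain ⟨f, ts, w₀, rfl, hg, hsub⟩ := subAt_cons_elim h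
    rw [List.cons_append, subAt_cons_eq hg, subAt_append hsub]

theorem replAt_append : ∀ {p : List ℕ} {s w : Tm F V}, s.subAt p = some w →
    ∀ {q v w'}, w.replAt q v = some w' → s.replAt (p ++ q) v = s.replAt p w'
  | [], s, w, h, q, v, w', hr => by
    rw [subAt_nil] at h; cases h; rw [List.nil_append, replAt_nil, hr]
  | i :: p, s, w, h, q, v, w', hr => by
    obtain ⟨f, ts, w₀, rfl, hg, hsub⟩ := subAt_cons_elim h
    rw [List.cons_append, replAt_cons_eq hg, replAt_cons_eq hg,
      replAt_append hsub hr]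

/-! ### Counting occurrences of a symbol -/

open scoped Classical

noncomputable def cnt (c : F) (t : Tm F V) : ℕ := t.symList.count c

theorem cnt_var (c : F) (x : V) : cnt c (var x : Tm F V) = 0 := by
  rw [cnt, symList_var]; rfl

theorem cnt_app (c : F) (f : F) (ts : List (Tm F V)) :
    cnt c (app f ts) = (if f = c then 1 else 0) + (ts.map (cnt c)).sum := by
  rw [cnt, symList_app, List.count_cons]
  have : ((ts.map symList).flatten).count c = (ts.map (cnt c)).sum := by
    rw [List.count_flatten, List.map_map]
    rfl
  rw [this]
  by_cases h : f = c <;> simp [h] <;> omega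

theorem cnt_eq_zero {c : F} {t : Tm F V} (h : c ∉ t.symList) : cnt c t = 0 :=
  List.count_eq_zero_of_not_mem h

theorem cnt_cc (c : F) : cnt c (app c [] : Tm F V) = 1 := by
  simp [cnt_app]

theorem cnt_repl {c : F} : ∀ {p : List ℕ} {s w w' t : Tm F V},
    s.subAt p = some w → s.replAt p w' = some t →
    cnt c t + cnt c w = cnt c s + cnt c w'
  | [], s, w, w', t, hs, hr => by
    rw [subAt_nil] at hs; rw [replAt_nil] at hr; cases hs; cases hr; omega
  | i :: p, s, w, w', t, hs, hr => by
    obtain ⟨f, ts, w₀, rfl, hg, hsub⟩ := subAt_cons_elim hs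
    rw [replAt_cons_eq hg] at hr
    cases hrr : w₀.replAt p w' with
    | none => rw [hrr] at hr; exact absurd hr (by simp)
    | some w₁ =>
      rw [hrr] at hr; injection hr with hr
      subst hr
      have ih := cnt_repl (c := c) hsub hrr
      have hsum := lsum_set' (cnt c) ts i w₀ w₁ hg
      rw [cnt_app, cnt_app]
      omega

theorem cnt_subst (c : F) (σ : V → Tm F V) (t : Tm F V) :
    cnt c (subst σ t) = cnt c t + (t.varList.map (fun x => cnt c (σ x))).sum := by
  induction t using tm_ind with
  | hv x => rw [subst_var, cnt_var, varList_var]; simp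
  | ha f ts ih =>
    rw [subst_app, cnt_app, cnt_app, varList_app, List.map_map]
    have h2 : ts.map (cnt c ∘ subst σ) =
        ts.map (fun t => cnt c t + (t.varList.map (fun x => cnt c (σ x))).sum) :=
      List.map_congr_left (fun t ht => ih t ht)
    rw [h2]
    have h3 : ((ts.map varList).flatten.map fun x => cnt c (σ x)).sum
        = ((ts.map (fun t => (t.varList.map (fun x => cnt c (σ x))).sum))).sum := by
      rw [List.map_flatten, List.sum_flatten, List.map_map, List.map_map]
      rfl
    rw [h3, List.sum_map_add]
    omega

/-! ### replAll lemmas -/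

theorem ne_cc_of_not_mem {c : F} {f : F} {ts : List (Tm F V)}
    (h : c ∉ (app f ts).symList) : app f ts ≠ app c [] := by
  intro he
  injection he with h1 h2
  subst h1
  rw [symList_app] at h
  exact h List.mem_cons_self

theorem not_mem_symList_of_mem {c : F} {f : F} {ts : List (Tm F V)}
    (h : c ∉ (app f ts).symList) {t : Tm F V} (ht : t ∈ ts) : c ∉ t.symList := by
  intro hc
  rw [symList_app] at h
  exact h (List.mem_cons_of_mem _ (List.mem_flatten.2 ⟨t.symList, List.mem_map_of_mem ht, hc⟩))

theorem replAll_not_occur {c : F} {w : Tm F V} :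
    ∀ {t : Tm F V}, c ∉ t.symList → replAll (app c []) w t = t := by
  intro t
  induction t using tm_ind with
  | hv x => intro _; exact replAll_var_ne w (by intro h; cases h)
  | ha f ts ih =>
    intro h
    rw [replAll_app_ne w (ne_cc_of_not_mem h)]
    congr 1
    conv_rhs => rw [← List.map_id ts]
    exact List.map_congr_left (fun t ht => ih t ht (not_mem_symList_of_mem h ht))

theorem subst_replAll {c : F} {w : Tm F V} (hw : w.Ground) (σ : V → Tm F V) :
    ∀ t : Tm F V, replAll (app c []) w (subst σ t)
      = subst (fun x => replAll (app c []) w (σ x)) (replAll (app c []) w t) := by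
  intro t
  induction t using tm_ind with
  | hv x =>
    rw [subst_var, replAll_var_ne w (by intro h; cases h), subst_var]
  | ha f ts ih =>
    by_cases he : app f ts = app c []
    · injection he with h1 h2
      subst h1; subst h2
      rw [subst_app, replAll_eq w rfl]
      simp only [List.map_nil]
      rw [replAll_eq w rfl, subst_ground hw]
    · have hne : app f (ts.map (subst σ)) ≠ app c [] := by
        intro hh
        injection hh with h1 h2
        exact he (by rw [h1, List.map_eq_nil_iff.1 h2])
      rw [subst_app, replAll_app_ne w hne, replAll_app_ne w he, subst_app,
        List.map_map, List.map_map]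
      congr 1
      exact List.map_congr_left (fun t ht => ih t ht)

theorem replAll_replAll {c : F} {u : Tm F V} (hu : u.Ground) :
    ∀ {t : Tm F V}, c ∉ t.symList → replAll (app c []) u (replAll u (app c []) t) = t := by
  intro t
  induction t using tm_ind with
  | hv x =>
    intro _
    rw [replAll_var_ne _ (fun h => ground_ne_var hu x h.symm),
      replAll_var_ne u (by intro h; cases h)]
  | ha f ts ih =>
    intro h
    by_cases he : app f ts = u
    · rw [replAll_eq _ he, replAll_eq u rfl, he]
    · rw [replAll_app_ne _ he]
      have hne : app f (ts.map (replAll u (app c []))) ≠ app c [] := by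
        intro hh
        injection hh with h1 _
        subst h1
        rw [symList_app] at h
        exact h List.mem_cons_self
      rw [replAll_app_ne u hne, List.map_map]
      congr 1
      conv_rhs => rw [← List.map_id ts]
      exact List.map_congr_left (fun t ht => ih t ht (not_mem_symList_of_mem h ht))

theorem replAll_subAt {c : F} {w : Tm F V} : ∀ {p : List ℕ} {s t : Tm F V},
    s.subAt p = some t →
    (replAll (app c []) w s).subAt p = some (replAll (app c []) w t)
  | [], s, t, h => by rw [subAt_nil] at h; cases h; rw [subAt_nil]
  | i :: p, s, t, h => by
    obtain ⟨f, ts, w₀, rfl, hg, hsub⟩ := subAt_cons_elim h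
    have hts : ts ≠ [] := by rintro rfl; simp at hg
    have hne : app f ts ≠ app c [] := by intro hh; injection hh with _ h2; exact hts h2
    rw [replAll_app_ne w hne]
    have hg' : (ts.map (replAll (app c []) w))[i]? = some (replAll (app c []) w w₀) := by
      rw [lget_map, hg]; rfl
    rw [subAt_cons_eq hg']
    exact replAll_subAt hsub

theorem replAll_replAt {c : F} {w : Tm F V} : ∀ {p : List ℕ} {s v t : Tm F V},
    s.replAt p v = some t →
    (replAll (app c []) w s).replAt p (replAll (app c []) w v)
      = some (replAll (app c []) w t)
  | [], s, v, t, h => by rw [replAt_nil] at h; cases h; rw [replAt_nil]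
  | i :: p, s, v, t, h => by
    obtain ⟨f, ts, w₀, w₁, rfl, hg, hr, rfl⟩ := replAt_cons_elim h
    have hts : ts ≠ [] := by rintro rfl; simp at hg
    have hne : app f ts ≠ app c [] := by intro hh; injection hh with _ h2; exact hts h2
    have hne2 : app f (ts.set i w₁) ≠ app c [] := by
      intro hh; injection hh with _ h2
      exact hts (by simpa using congrArg List.length h2)
    rw [replAll_app_ne w hne]
    have hg' : (ts.map (replAll (app c []) w))[i]? = some (replAll (app c []) w w₀) := by
      rw [lget_map, hg]; rfl
    rw [replAt_cons_eq hg', replAll_replAt hr]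
    rw [replAll_app_ne w hne2, lmap_set]
    rfl

/-! ### Rewriting toolkit -/

theorem reach_refl {R : Set (Rule F V)} (t : Tm F V) : Reach R t t := Relation.ReflTransGen.refl

theorem rewMod_of_rew {R E : Set (Rule F V)} {s t : Tm F V} (h : Rew R s t) : RewMod R E s t :=
  ⟨s, t, reach_refl s, h, reach_refl t⟩

theorem rewMod_absorb_right {R E : Set (Rule F V)} {s t v : Tm F V}
    (h : RewMod R E s t) (h2 : Reach E t v) : RewMod R E s v := by
  obtain ⟨a, b, h1, hr, h3⟩ := h
  exact ⟨a, b, h1, hr, h3.trans h2⟩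

theorem rewMod_absorb_left {R E : Set (Rule F V)} {s t v : Tm F V}
    (h2 : Reach E s t) (h : RewMod R E t v) : RewMod R E s v := by
  obtain ⟨a, b, h1, hr, h3⟩ := h
  exact ⟨a, b, h2.trans h1, hr, h3⟩

theorem rewAt_under {R : Set (Rule F V)} {q : List ℕ} {a b : Tm F V}
    (h : RewAt R q a b) {s t : Tm F V} {p : List ℕ}
    (hs : s.subAt p = some a) (ht : s.replAt p b = some t) : RewAt R (p ++ q) s t := by
  obtain ⟨r, hr, σ, hw1, hw2⟩ := h
  refine ⟨r, hr, σ, ?_, ?_⟩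
  · rw [subAt_append hs]; exact hw1
  · rw [replAt_append hs hw2]; exact ht

theorem rew_under {R : Set (Rule F V)} {a b : Tm F V}
    (h : Rew R a b) {s t : Tm F V} {p : List ℕ}
    (hs : s.subAt p = some a) (ht : s.replAt p b = some t) : Rew R s t := by
  obtain ⟨q, hq⟩ := h
  exact ⟨p ++ q, rewAt_under hq hs ht⟩

theorem reach_under {R : Set (Rule F V)} {a b : Tm F V} (h : Reach R a b) :
    ∀ {s t : Tm F V} {p : List ℕ}, s.subAt p = some a → s.replAt p b = some t →
      Reach R s t := by
  induction h with
  | refl =>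
    intro s t p hs hr
    rw [replAt_self hs] at hr; cases hr; exact reach_refl s
  | @tail m b hab hstep ih =>
    intro s t p hs hr
    obtain ⟨sm, hsm⟩ := replAt_of_subAt hs m
    refine Relation.ReflTransGen.tail (ih hs hsm) ?_
    refine rew_under hstep (subAt_replAt hsm) ?_
    rw [replAt_replAt hsm b]; exact hr

theorem reach_child {R : Set (Rule F V)} {a b : Tm F V} (h : Reach R a b)
    {ts : List (Tm F V)} {i : ℕ} (hg : ts[i]? = some a) (f : F) :
    Reach R (app f ts) (app f (ts.set i b)) := by
  refine reach_under h (s := app f ts) (p := [i]) ?_ ?_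
  · rw [subAt_cons_eq hg, subAt_nil]
  · rw [replAt_cons_eq hg, replAt_nil]; rfl

theorem reach_app_congr {R : Set (Rule F V)} {ss ts : List (Tm F V)}
    (h : List.Forall₂ (Reach R) ss ts) (f : F) :
    ∀ pre : List (Tm F V), Reach R (app f (pre ++ ss)) (app f (pre ++ ts)) := by
  induction h with
  | nil => intro pre; exact reach_refl _
  | @cons a b ss ts hab _ ih =>
    intro pre
    have step1 : Reach R (app f (pre ++ a :: ss)) (app f (pre ++ b :: ss)) := by
      have := reach_child hab (lget_append pre a ss) f
      rwa [lset_append] at this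
    have step2 := ih (pre ++ [b])
    rw [List.append_assoc, List.append_assoc, List.singleton_append] at step2
    exact step1.trans step2

theorem reach_app {R : Set (Rule F V)} {ss ts : List (Tm F V)}
    (h : List.Forall₂ (Reach R) ss ts) (f : F) : Reach R (app f ss) (app f ts) := by
  have := reach_app_congr h f []
  simpa using this

theorem forall₂_reach_map {R : Set (Rule F V)} {g h : Tm F V → Tm F V} :
    ∀ {ts : List (Tm F V)}, (∀ t ∈ ts, Reach R (g t) (h t)) →
      List.Forall₂ (Reach R) (ts.map g) (ts.map h)
  | [], _ => List.Forall₂.nil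
  | t :: ts, hh =>
    List.Forall₂.cons (hh t List.mem_cons_self)
      (forall₂_reach_map (fun t' ht' => hh t' (List.mem_cons_of_mem _ ht')))

theorem reach_crule {R2 : Set (Rule F V)} {c : F} {u : Tm F V}
    (hmem : (⟨app c [], u⟩ : Rule F V) ∈ R2) (hu : u.Ground) :
    ∀ (t : Tm F V) (σ : V → Tm F V),
      Reach R2 (subst σ (replAll u (app c []) t)) (subst σ t) := by
  intro t
  induction t using tm_ind with
  | hv x =>
    intro σ
    rw [replAll_var_ne _ (fun h => ground_ne_var hu x h.symm)]
    exact reach_refl _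
  | ha f ts ih =>
    intro σ
    by_cases he : app f ts = u
    · rw [replAll_eq _ he]
      refine Relation.ReflTransGen.single ⟨[], ⟨Tm.app c [], u⟩, hmem, σ, ?_, ?_⟩
      · rw [subAt_nil]
      · rw [replAt_nil, he]
    · rw [replAll_app_ne _ he, subst_app, subst_app, List.map_map]
      exact reach_app (forall₂_reach_map (fun t ht => ih t ht σ)) f

/-! ### Simulation lemmas -/

theorem transGen_of_parts {R' E : Set (Rule F V)} {b t : Tm F V} (hbt : Reach E b t) :
    ∀ {a : Tm F V}, Reach R' a b → ∀ {s}, RewMod R' E s a →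
      Relation.TransGen (RewMod R' E) s t := by
  intro a h
  induction h using Relation.ReflTransGen.head_induction_on with
  | refl => intro s hs; exact Relation.TransGen.single (rewMod_absorb_right hs hbt)
  | head hstep _ ih => intro s hs; exact Relation.TransGen.head hs (ih (rewMod_of_rew hstep))

theorem rewMod_to_transGen {R E R' : Set (Rule F V)} {c : F} {u : Tm F V}
    (hu : u.Ground)
    (hcr : (⟨app c [], u⟩ : Rule F V) ∈ R')
    (hR : ∀ r ∈ R, (⟨r.lhs, replAll u (app c []) r.rhs⟩ : Rule F V) ∈ R')
    {s t : Tm F V} (h : RewMod R E s t) :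
    Relation.TransGen (RewMod R' E) s t := by
  obtain ⟨a, b, hsa, ⟨p, r, hrR, σ, hw1, hw2⟩, hbt⟩ := h
  obtain ⟨a', ha'⟩ := replAt_of_subAt hw1 (subst σ (replAll u (app c []) r.rhs))
  have hstep1 : RewMod R' E s a' :=
    ⟨a, a', hsa, ⟨p, ⟨r.lhs, replAll u (app c []) r.rhs⟩, hR r hrR, σ, hw1, ha'⟩,
      reach_refl a'⟩
  have hreach : Reach R' a' b := by
    refine reach_under (reach_crule hcr hu r.rhs σ) (subAt_replAt ha') ?_
    rw [replAt_replAt ha']; exact hw2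
  exact transGen_of_parts hbt hreach hstep1

/-! ### Mapping a derivation through `φ = replAll (app c []) u` -/

theorem map_rewWith {c : F} {u : Tm F V} (hu : u.Ground) {l r r' : Tm F V}
    (hl : c ∉ l.symList) {p : List ℕ} {σ : V → Tm F V} {s t : Tm F V}
    (h : RewWith l r p σ s t)
    (h2 : replAll (app c []) u (subst σ r)
      = subst (fun x => replAll (app c []) u (σ x)) r') :
    RewWith l r' p (fun x => replAll (app c []) u (σ x))
      (replAll (app c []) u s) (replAll (app c []) u t) := by
  obtain ⟨h1, h3⟩ := h
  constructor
  · have hh := replAll_subAt (c := c) (w := u) h1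
    rw [subst_replAll hu, replAll_not_occur hl] at hh
    exact hh
  · have hh := replAll_replAt (c := c) (w := u) h3
    rw [h2] at hh
    exact hh

theorem map_reach_E {c : F} {u : Tm F V} {E : Set (Rule F V)} (hu : u.Ground)
    (hfr : ∀ r ∈ E, c ∉ r.lhs.symList ∧ c ∉ r.rhs.symList)
    {s t : Tm F V} (h : Reach E s t) :
    Reach E (replAll (app c []) u s) (replAll (app c []) u t) := by
  induction h with
  | refl => exact reach_refl _
  | tail _ hstep ih =>
    refine ih.tail ?_
    obtain ⟨p, rr, hrr, σ, hw⟩ := hstep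
    refine ⟨p, rr, hrr, fun x => replAll (app c []) u (σ x), ?_⟩
    exact map_rewWith hu (hfr rr hrr).1 hw
      (by rw [subst_replAll hu, replAll_not_occur (hfr rr hrr).2])

theorem crule_collapse {c : F} {u : Tm F V} (hu : u.Ground) (hcu : c ∉ u.symList)
    {p : List ℕ} {σ : V → Tm F V} {s t : Tm F V}
    (h : RewWith (app c []) u p σ s t) :
    replAll (app c []) u s = replAll (app c []) u t := by
  obtain ⟨h1, h2⟩ := h
  have hcc : (app c [] : Tm F V).subst σ = app c [] := by rw [subst_app]; rfl
  rw [hcc] at h1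
  rw [show u.subst σ = u from subst_ground hu σ] at h2
  have h3 := replAll_replAt (c := c) (w := u) h2
  rw [replAll_not_occur hcu] at h3
  have h4 := replAll_subAt (c := c) (w := u) h1
  rw [replAll_eq _ rfl] at h4
  have h5 := replAt_self h4
  rw [h5] at h3
  injection h3 with h3

/-! ### Counting -/

theorem cnt_rewWith_eq {c : F} {l r : Tm F V} (hl : c ∉ l.symList) (hr : c ∉ r.symList)
    (hlin : l.Linear) (hrlin : r.Linear) (hvar : ∀ x, x ∈ l.varList ↔ x ∈ r.varList)
    {p : List ℕ} {σ : V → Tm F V} {s t : Tm F V} (h : RewWith l r p σ s t) :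
    cnt c s = cnt c t := by
  obtain ⟨h1, h2⟩ := h
  have hrepl := cnt_repl (c := c) h1 h2
  have e1 : cnt c (subst σ l) = (l.varList.map (fun x => cnt c (σ x))).sum := by
    rw [cnt_subst, cnt_eq_zero hl]; omega
  have e2 : cnt c (subst σ r) = (r.varList.map (fun x => cnt c (σ x))).sum := by
    rw [cnt_subst, cnt_eq_zero hr]; omega
  have hperm : l.varList.Perm r.varList := (List.perm_ext_iff_of_nodup hlin hrlin).2 hvar
  have hsum := (hperm.map (fun x => cnt c (σ x))).sum_eq
  rw [show Tm.subst σ l = subst σ l from rfl] at hrepl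
  omega

theorem cnt_reach_E {c : F} {E : Set (Rule F V)} (hE : PermutativeTheory E)
    (hfr : ∀ r ∈ E, c ∉ r.lhs.symList ∧ c ∉ r.rhs.symList)
    {s t : Tm F V} (h : Reach E s t) : cnt c s = cnt c t := by
  induction h with
  | refl => rfl
  | tail _ hstep ih =>
    obtain ⟨p, rr, hrr, σ, hw⟩ := hstep
    obtain ⟨hwf, hlin, hrlin, _, _, _, hvar⟩ := hE.1 rr hrr
    exact ih.trans (cnt_rewWith_eq (hfr rr hrr).1 (hfr rr hrr).2 hlin hrlin hvar hw)

theorem cnt_crule_step {c : F} {u : Tm F V} (hu : u.Ground) (hcu : c ∉ u.symList)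
    {p : List ℕ} {σ : V → Tm F V} {s t : Tm F V}
    (h : RewWith (app c []) u p σ s t) : cnt c t + 1 = cnt c s := by
  obtain ⟨h1, h2⟩ := h
  have hcc : (app c [] : Tm F V).subst σ = app c [] := by rw [subst_app]; rfl
  rw [hcc] at h1
  rw [show u.subst σ = u from subst_ground hu σ] at h2
  have := cnt_repl (c := c) h1 h2
  rw [cnt_cc, cnt_eq_zero hcu] at this
  omega

/-! ### Index extraction -/

open scoped Classical in
noncomputable def seqIdx (P : ℕ → Prop) (hA : ∀ N, ∃ n, N ≤ n ∧ P n) : ℕ → ℕ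
  | 0 => Nat.find (hA 0)
  | k + 1 => Nat.find (hA (seqIdx P hA k + 1))

open scoped Classical in
theorem seqIdx_P (P : ℕ → Prop) (hA : ∀ N, ∃ n, N ≤ n ∧ P n) (k : ℕ) :
    P (seqIdx P hA k) := by
  cases k with
  | zero => exact (Nat.find_spec (hA 0)).2
  | succ k => exact (Nat.find_spec (hA (seqIdx P hA k + 1))).2

open scoped Classical in
theorem seqIdx_lt (P : ℕ → Prop) (hA : ∀ N, ∃ n, N ≤ n ∧ P n) (k : ℕ) :
    seqIdx P hA k < seqIdx P hA (k + 1) := by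
  have := (Nat.find_spec (hA (seqIdx P hA k + 1))).1
  show seqIdx P hA k < Nat.find (hA (seqIdx P hA k + 1))
  omega

open scoped Classical in
theorem seqIdx_between (P : ℕ → Prop) (hA : ∀ N, ∃ n, N ≤ n ∧ P n) (k m : ℕ)
    (h1 : seqIdx P hA k < m) (h2 : m < seqIdx P hA (k + 1)) : ¬ P m := by
  intro hP
  exact Nat.find_min (hA (seqIdx P hA k + 1)) h2 ⟨by omega, hP⟩


end Stmt16Aux


open Stmt16Aux

/-- For a non-constant ground proper subterm `u` of some right-hand side
of `R` and a fresh constant `c`, with `R' = {c → u} ∪ {l → NF_{u→c}(r) : l → r ∈ R}`: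
`R/E` is terminating iff `R'/E` is terminating. -/
theorem stmt16 {F V : Type} (R E : Set (Rule F V)) (hE : PermutativeTheory E)
    (u : Tm F V) (hg : u.Ground) (hnc : ¬ u.IsConst)
    (hsub : ∃ r ∈ R, ∃ p : List ℕ, p ≠ [] ∧ r.rhs.subAt p = some u)
    (c : F)
    (hfresh : (∀ r ∈ R ∪ E, c ∉ r.lhs.symList ∧ c ∉ r.rhs.symList) ∧ c ∉ u.symList) :
    Terminating R E ↔
      Terminating
        (insert (⟨Tm.app c [], u⟩ : Rule F V)
          {r' | ∃ r ∈ R, r' = ⟨r.lhs, replAll u (Tm.app c []) r.rhs⟩})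
        E := by
  classical
  constructor
  · -- R/E terminating → R'/E terminating
    intro hT hex
    obtain ⟨f, hf⟩ := hex
    have hch : ∀ n, ∃ (a b : Tm F V) (p : List ℕ) (rr : Rule F V) (σ : V → Tm F V),
        Reach E (f n) a ∧
        (rr = (⟨Tm.app c [], u⟩ : Rule F V) ∨
          ∃ r ∈ R, rr = ⟨r.lhs, replAll u (Tm.app c []) r.rhs⟩) ∧
        RewWith rr.lhs rr.rhs p σ a b ∧ Reach E b (f (n + 1)) := by
      intro n
      obtain ⟨a, b, h1, ⟨p, rr, hrr, σ, hw⟩, h3⟩ := hf n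
      rw [Set.mem_insert_iff] at hrr
      exact ⟨a, b, p, rr, σ, h1, by simpa using hrr, hw, h3⟩
    choose a b p rr σ hEa hrr hw hEb using hch
    have hfreshE : ∀ r ∈ E, c ∉ r.lhs.symList ∧ c ∉ r.rhs.symList :=
      fun r hr => hfresh.1 r (Set.mem_union_right R hr)
    have hfreshR : ∀ r ∈ R, c ∉ r.lhs.symList ∧ c ∉ r.rhs.symList :=
      fun r hr => hfresh.1 r (Set.mem_union_left E hr)
    set φ : Tm F V → Tm F V := replAll (Tm.app c []) u with hphi
    have hstepP : ∀ n, (∃ r ∈ R, rr n = ⟨r.lhs, replAll u (Tm.app c []) r.rhs⟩) →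
        RewMod R E (φ (f n)) (φ (f (n + 1))) := by
      intro n hPn
      obtain ⟨r, hrR, hrr_eq⟩ := hPn
      refine ⟨φ (a n), φ (b n), map_reach_E hg hfreshE (hEa n), ?_,
        map_reach_E hg hfreshE (hEb n)⟩
      refine ⟨p n, r, hrR, fun x => φ (σ n x), ?_⟩
      have hw' := hw n
      rw [hrr_eq] at hw'
      exact map_rewWith hg (hfreshR r hrR).1 hw'
        (by rw [subst_replAll hg, replAll_replAll hg (hfreshR r hrR).2])
    have hstepC : ∀ n, ¬ (∃ r ∈ R, rr n = ⟨r.lhs, replAll u (Tm.app c []) r.rhs⟩) →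
        Reach E (φ (f n)) (φ (f (n + 1))) := by
      intro n hPn
      have hcrn : rr n = (⟨Tm.app c [], u⟩ : Rule F V) := (hrr n).resolve_right hPn
      have hw' := hw n
      rw [hcrn] at hw'
      have hcol := crule_collapse hg hfresh.2 hw'
      have h1 := map_reach_E hg hfreshE (hEa n)
      have h2 := map_reach_E hg hfreshE (hEb n)
      rw [← hcol] at h2
      exact h1.trans h2
    have hdecr : ∀ n, ¬ (∃ r ∈ R, rr n = ⟨r.lhs, replAll u (Tm.app c []) r.rhs⟩) →
        cnt c (f (n + 1)) + 1 = cnt c (f n) := by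
      intro n hPn
      have hcrn : rr n = (⟨Tm.app c [], u⟩ : Rule F V) := (hrr n).resolve_right hPn
      have hw' := hw n
      rw [hcrn] at hw'
      have e1 := cnt_reach_E hE hfreshE (hEa n)
      have e2 := cnt_reach_E hE hfreshE (hEb n)
      have e3 := cnt_crule_step hg hfresh.2 hw'
      omega
    by_cases hcase : ∀ N, ∃ n, N ≤ n ∧
        (∃ r ∈ R, rr n = ⟨r.lhs, replAll u (Tm.app c []) r.rhs⟩)
    · set P : ℕ → Prop :=
        fun n => ∃ r ∈ R, rr n = ⟨r.lhs, replAll u (Tm.app c []) r.rhs⟩ with hPdef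
      have hstep : ∀ k, RewMod R E (φ (f (seqIdx P hcase k))) (φ (f (seqIdx P hcase (k + 1)))) := by
        intro k
        have h1 := hstepP (seqIdx P hcase k) (seqIdx_P P hcase k)
        have htail : ∀ m, seqIdx P hcase k + 1 ≤ m → m ≤ seqIdx P hcase (k + 1) →
            Reach E (φ (f (seqIdx P hcase k + 1))) (φ (f m)) := by
          intro m hm
          induction m, hm using Nat.le_induction with
          | base => intro _; exact reach_refl _
          | succ m hm ih =>
            intro hle
            have hmid : Reach E (φ (f m)) (φ (f (m + 1))) :=
              hstepC m (seqIdx_between P hcase k m (by omega) (by omega))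
            exact (ih (by omega)).trans hmid
        have hlt := seqIdx_lt P hcase k
        exact rewMod_absorb_right h1 (htail (seqIdx P hcase (k + 1)) (by omega) le_rfl)
      exact hT ⟨fun k => φ (f (seqIdx P hcase k)), hstep⟩
    · push_neg at hcase
      obtain ⟨N, hN⟩ := hcase
      have hdec : ∀ k, cnt c (f (N + k)) + k ≤ cnt c (f N) := by
        intro k
        induction k with
        | zero => simp
        | succ k ih =>
          have h2 := hdecr (N + k) (by push_neg; exact hN (N + k) (by omega))
          have h3 : N + (k + 1) = N + k + 1 := by omega
          rw [h3]
          omega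
      have := hdec (cnt c (f N) + 1)
      omega
  · -- R'/E terminating → R/E terminating
    intro hT' hex
    obtain ⟨f, hf⟩ := hex
    have hcr : (⟨Tm.app c [], u⟩ : Rule F V) ∈
        insert (⟨Tm.app c [], u⟩ : Rule F V)
          {r' | ∃ r ∈ R, r' = ⟨r.lhs, replAll u (Tm.app c []) r.rhs⟩} :=
      Set.mem_insert _ _
    have hRr : ∀ r ∈ R, (⟨r.lhs, replAll u (Tm.app c []) r.rhs⟩ : Rule F V) ∈
        insert (⟨Tm.app c [], u⟩ : Rule F V)
          {r' | ∃ r ∈ R, r' = ⟨r.lhs, replAll u (Tm.app c []) r.rhs⟩} :=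
      fun r hr => Set.mem_insert_of_mem _ ⟨r, hr, rfl⟩
    have htg := fun n => rewMod_to_transGen hg hcr hRr (hf n)
    obtain ⟨g2, hg2⟩ := flatten_chain f htg
    exact hT' ⟨g2, hg2⟩
end

section
/- Consider the TRS R = { f(x) → g(x,x,x), g(x, u_i(y), v_i(z)) → h(x,y,z), h(x, u_i(y), v_i(z)) → h(x,y,z), h(x, ε, ε) → f(x) : 1 ≤ i ≤ n } built from a Post correspondence instance ⟨u_1,v_1⟩,…,⟨u_n,v_n⟩ over alphabet Σ (strings encoded as compositions of unary symbols applied to a constant ε). Then R is right-flat, and R is innermost non-terminating if and only if the PCP instance has a solution, i.e., there exist k > 0 and i_1,…,i_k ∈ {1,…,n} with u_{i_1}⋯u_{i_k} = v_{i_1}⋯v_{i_k}. -/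
/-- Signature for the PCP reduction: one unary symbol per letter, a constant `ε`, and
the symbols `f`, `g`, `h`. -/
inductive PCPSym (A : Type) : Type
  | letter : A → PCPSym A
  | eps : PCPSym A
  | fS : PCPSym A
  | gS : PCPSym A
  | hS : PCPSym A

/-- Encode a string as a composition of unary symbols applied to a term. -/
def encodeStr {A V : Type} : List A → Tm (PCPSym A) V → Tm (PCPSym A) V
  | [], t => t
  | a :: w, t => Tm.app (PCPSym.letter a) [encodeStr w t]

/-- The TRS `R` of the reduction:
`f(x) → g(x,x,x)`, `g(x, uᵢ(y), vᵢ(z)) → h(x,y,z)`,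
`h(x, uᵢ(y), vᵢ(z)) → h(x,y,z)`, `h(x, ε, ε) → f(x)`. -/
def pcpTRS {A : Type} (n : ℕ) (u v : Fin n → List A) : Set (Rule (PCPSym A) ℕ) :=
  {(⟨Tm.app PCPSym.fS [Tm.var 0],
     Tm.app PCPSym.gS [Tm.var 0, Tm.var 0, Tm.var 0]⟩ : Rule (PCPSym A) ℕ)} ∪
  {r | ∃ i : Fin n,
      r = ⟨Tm.app PCPSym.gS
              [Tm.var 0, encodeStr (u i) (Tm.var 1), encodeStr (v i) (Tm.var 2)],
           Tm.app PCPSym.hS [Tm.var 0, Tm.var 1, Tm.var 2]⟩ ∨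
      r = ⟨Tm.app PCPSym.hS
              [Tm.var 0, encodeStr (u i) (Tm.var 1), encodeStr (v i) (Tm.var 2)],
           Tm.app PCPSym.hS [Tm.var 0, Tm.var 1, Tm.var 2]⟩} ∪
  {(⟨Tm.app PCPSym.hS [Tm.var 0, Tm.app PCPSym.eps [], Tm.app PCPSym.eps []],
     Tm.app PCPSym.fS [Tm.var 0]⟩ : Rule (PCPSym A) ℕ)}

section Aux
open Tm PCPSym

variable {A : Type}

@[simp] lemma Tm.subst_var (σ : ℕ → Tm (PCPSym A) ℕ) (x : ℕ) :
    (Tm.var x : Tm (PCPSym A) ℕ).subst σ = σ x := by rw [Tm.subst]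

lemma Tm.subst_app (σ : ℕ → Tm (PCPSym A) ℕ) (f : PCPSym A) (ts : List (Tm (PCPSym A) ℕ)) :
    (Tm.app f ts).subst σ = Tm.app f (ts.map (fun t => t.subst σ)) := by
  rw [Tm.subst]
  congr 1
  exact List.attach_map_val

@[simp] lemma Tm.subAt_nil (t : Tm (PCPSym A) ℕ) : t.subAt [] = some t := by rw [Tm.subAt]

lemma Tm.subAt_cons_some (f : PCPSym A) (ts : List (Tm (PCPSym A) ℕ)) (j : ℕ) (p : List ℕ)
    (x : Tm (PCPSym A) ℕ) (h : ts[j]? = some x) :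
    (Tm.app f ts).subAt (j :: p) = x.subAt p := by rw [Tm.subAt, h]

lemma Tm.subAt_cons_none (f : PCPSym A) (ts : List (Tm (PCPSym A) ℕ)) (j : ℕ) (p : List ℕ)
    (h : ts[j]? = none) :
    (Tm.app f ts).subAt (j :: p) = none := by rw [Tm.subAt, h]

@[simp] lemma Tm.replAt_nil (t s : Tm (PCPSym A) ℕ) : t.replAt [] s = some s := by rw [Tm.replAt]

lemma Tm.replAt_cons_some (f : PCPSym A) (ts : List (Tm (PCPSym A) ℕ)) (j : ℕ) (p : List ℕ)
    (s x : Tm (PCPSym A) ℕ) (h : ts[j]? = some x) :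
    (Tm.app f ts).replAt (j :: p) s =
      (x.replAt p s).map (fun u' => Tm.app f (ts.set j u')) := by rw [Tm.replAt, h]

lemma Tm.subAt_var_cons (x : ℕ) (j : ℕ) (p : List ℕ) :
    (Tm.var x : Tm (PCPSym A) ℕ).subAt (j :: p) = none := by rw [Tm.subAt]

end Aux
section Aux2
open Tm PCPSym

variable {A : Type}

/-- spine/tail abstraction of a term: the maximal prefix of unary letter
symbols, and whether the remaining tail is exactly `ε`. -/
def str : Tm (PCPSym A) ℕ → List A × Bool
  | .app (.letter a) [t] => (a :: (str t).1, (str t).2)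
  | .app .eps [] => ([], true)
  | _ => ([], false)

@[simp] lemma str_eps : str (Tm.app PCPSym.eps [] : Tm (PCPSym A) ℕ) = ([], true) := rfl

@[simp] lemma str_letter (a : A) (t : Tm (PCPSym A) ℕ) :
    str (Tm.app (PCPSym.letter a) [t]) = (a :: (str t).1, (str t).2) := rfl

lemma str_cases (t : Tm (PCPSym A) ℕ) :
    (∃ a t', t = Tm.app (PCPSym.letter a) [t']) ∨
    (t = Tm.app PCPSym.eps []) ∨
    (str t = ([], false) ∧ t ≠ Tm.app PCPSym.eps [] ∧
      ∀ a t', t ≠ Tm.app (PCPSym.letter a) [t']) := by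
  match t with
  | .var x => right; right; refine ⟨rfl, by simp, by simp⟩
  | .app (.letter a) [] => right; right; refine ⟨rfl, by simp, by simp⟩
  | .app (.letter a) [t'] => left; exact ⟨a, t', rfl⟩
  | .app (.letter a) (t1 :: t2 :: ts) => right; right; refine ⟨rfl, by simp, by simp⟩
  | .app .eps [] => right; left; rfl
  | .app .eps (t1 :: ts) => right; right; refine ⟨rfl, by simp, by simp⟩
  | .app .fS ts => right; right; refine ⟨rfl, by simp, by simp⟩
  | .app .gS ts => right; right; refine ⟨rfl, by simp, by simp⟩
  | .app .hS ts => right; right; refine ⟨rfl, by simp, by simp⟩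

end Aux2
section Aux3
open Tm PCPSym

variable {A : Type}

lemma encodeStr_append (w1 w2 : List A) (t : Tm (PCPSym A) ℕ) :
    encodeStr (w1 ++ w2) t = encodeStr w1 (encodeStr w2 t) := by
  induction w1 with
  | nil => simp [encodeStr]
  | cons a w ih => simp [encodeStr, ih]

lemma subst_encodeStr (σ : ℕ → Tm (PCPSym A) ℕ) (w : List A) (t : Tm (PCPSym A) ℕ) :
    (encodeStr w t).subst σ = encodeStr w (t.subst σ) := by
  induction w with
  | nil => rfl
  | cons a w ih => simp [encodeStr, Tm.subst_app, ih]

lemma str_encodeStr (w : List A) (t : Tm (PCPSym A) ℕ) :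
    str (encodeStr w t) = (w ++ (str t).1, (str t).2) := by
  induction w with
  | nil => rfl
  | cons a w ih => simp [encodeStr, ih]

lemma subAt_encodeStr (w : List A) (t : Tm (PCPSym A) ℕ) :
    (encodeStr w t).subAt (List.replicate w.length 0) = some t := by
  induction w with
  | nil => rw [show encodeStr ([]:List A) t = t from by rw [encodeStr]]; simp
  | cons a w ih =>
    simp only [encodeStr, List.length_cons, List.replicate_succ]
    rw [Tm.subAt_cons_some _ _ _ _ (encodeStr w t) (by simp)]
    exact ih

/-- every subterm of a pure string is a pure string -/
lemma subAt_string (w : List A) (p : List ℕ) (s : Tm (PCPSym A) ℕ)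
    (h : (encodeStr w (Tm.app PCPSym.eps [])).subAt p = some s) :
    ∃ w', s = encodeStr w' (Tm.app PCPSym.eps []) := by
  induction w generalizing p with
  | nil =>
    match p with
    | [] => exact ⟨[], by simpa [encodeStr] using h.symm⟩
    | j :: p' =>
      rw [show encodeStr ([] : List A) (Tm.app PCPSym.eps []) = Tm.app PCPSym.eps [] from rfl,
        Tm.subAt_cons_none _ _ _ _ (by simp)] at h
      exact absurd h (by simp)
  | cons a w ih =>
    match p with
    | [] => exact ⟨a :: w, by simpa [encodeStr] using h.symm⟩
    | j :: p' =>
      rw [show encodeStr (a :: w) (Tm.app PCPSym.eps [])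
            = Tm.app (PCPSym.letter a) [encodeStr w (Tm.app PCPSym.eps [])] from rfl] at h
      match j with
      | 0 =>
        rw [Tm.subAt_cons_some _ _ _ _ (encodeStr w (Tm.app PCPSym.eps [])) (by simp)] at h
        exact ih p' h
      | j + 1 =>
        rw [Tm.subAt_cons_none _ _ _ _ (by simp)] at h
        exact absurd h (by simp)

lemma str_e0 {b : Tm (PCPSym A) ℕ} (h : str b = ([], true)) :
    b = Tm.app PCPSym.eps [] := by
  rcases str_cases b with ⟨a, t', rfl⟩ | rfl | ⟨h0, _, _⟩
  · simp at h
  · rfl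
  · rw [h0] at h; simp at h

lemma str_prefix : ∀ (w : List A) (b : Tm (PCPSym A) ℕ), w <+: (str b).1 →
    ∃ b', b = encodeStr w b' ∧ (str b').1 = (str b).1.drop w.length ∧ (str b').2 = (str b).2 := by
  intro w
  induction w with
  | nil => intro b _; exact ⟨b, rfl, by simp, rfl⟩
  | cons a w ih =>
    intro b hpre
    rcases str_cases b with ⟨a', t', rfl⟩ | rfl | ⟨h0, _, _⟩
    · simp only [str_letter] at hpre
      obtain ⟨rest, hrest⟩ := hpre
      simp only [List.cons_append] at hrest
      obtain ⟨ha, htail⟩ : a = a' ∧ (str t').1 = w ++ rest := by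
        rw [List.cons_eq_cons] at hrest
        exact ⟨hrest.1, hrest.2.symm⟩
      obtain ⟨b', hb', hd, he⟩ := ih t' ⟨rest, htail.symm⟩
      refine ⟨b', by rw [encodeStr, ← hb', ha], ?_, by simp [he]⟩
      simp [hd, htail]
    · simp at hpre
    · rw [h0] at hpre; simp at hpre

end Aux3

section Aux4
open Tm PCPSym

variable {A : Type} {n : ℕ} {u v : Fin n → List A}

/-- the four rule shapes -/
def fRule : Rule (PCPSym A) ℕ :=
  ⟨Tm.app PCPSym.fS [Tm.var 0], Tm.app PCPSym.gS [Tm.var 0, Tm.var 0, Tm.var 0]⟩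

def gRule (u v : Fin n → List A) (i : Fin n) : Rule (PCPSym A) ℕ :=
  ⟨Tm.app PCPSym.gS [Tm.var 0, encodeStr (u i) (Tm.var 1), encodeStr (v i) (Tm.var 2)],
   Tm.app PCPSym.hS [Tm.var 0, Tm.var 1, Tm.var 2]⟩

def hRule (u v : Fin n → List A) (i : Fin n) : Rule (PCPSym A) ℕ :=
  ⟨Tm.app PCPSym.hS [Tm.var 0, encodeStr (u i) (Tm.var 1), encodeStr (v i) (Tm.var 2)],
   Tm.app PCPSym.hS [Tm.var 0, Tm.var 1, Tm.var 2]⟩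

def eRule : Rule (PCPSym A) ℕ :=
  ⟨Tm.app PCPSym.hS [Tm.var 0, Tm.app PCPSym.eps [], Tm.app PCPSym.eps []],
   Tm.app PCPSym.fS [Tm.var 0]⟩

lemma mem_pcpTRS_iff (r : Rule (PCPSym A) ℕ) :
    r ∈ pcpTRS n u v ↔
      r = fRule ∨ (∃ i, r = gRule u v i ∨ r = hRule u v i) ∨ r = eRule := by
  simp only [pcpTRS, Set.mem_union, Set.mem_singleton_iff, Set.mem_setOf_eq,
    fRule, gRule, hRule, eRule, or_assoc]

lemma fRule_mem : (fRule : Rule (PCPSym A) ℕ) ∈ pcpTRS n u v :=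
  (mem_pcpTRS_iff _).2 (Or.inl rfl)
lemma gRule_mem (i : Fin n) : gRule u v i ∈ pcpTRS n u v :=
  (mem_pcpTRS_iff _).2 (Or.inr (Or.inl ⟨i, Or.inl rfl⟩))
lemma hRule_mem (i : Fin n) : hRule u v i ∈ pcpTRS n u v :=
  (mem_pcpTRS_iff _).2 (Or.inr (Or.inl ⟨i, Or.inr rfl⟩))
lemma eRule_mem : (eRule : Rule (PCPSym A) ℕ) ∈ pcpTRS n u v :=
  (mem_pcpTRS_iff _).2 (Or.inr (Or.inr rfl))

/-- substitution sending 0,1,2 to a,b,c -/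
def sub3 (a b c : Tm (PCPSym A) ℕ) : ℕ → Tm (PCPSym A) ℕ :=
  fun x => if x = 0 then a else if x = 1 then b else c

lemma rewAt_f (a : Tm (PCPSym A) ℕ) :
    RewAt (pcpTRS n u v) [] (Tm.app PCPSym.fS [a]) (Tm.app PCPSym.gS [a, a, a]) := by
  refine ⟨fRule, fRule_mem, sub3 a a a, ?_, ?_⟩
  · simp [fRule, Tm.subst_app, sub3]
  · simp [fRule, Tm.subst_app, sub3]

lemma rewAt_g (i : Fin n) (a b c : Tm (PCPSym A) ℕ) :
    RewAt (pcpTRS n u v) [] (Tm.app PCPSym.gS [a, encodeStr (u i) b, encodeStr (v i) c])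
      (Tm.app PCPSym.hS [a, b, c]) := by
  refine ⟨gRule u v i, gRule_mem i, sub3 a b c, ?_, ?_⟩
  · simp [gRule, Tm.subst_app, subst_encodeStr, sub3]
  · simp [gRule, Tm.subst_app, sub3]

lemma rewAt_h (i : Fin n) (a b c : Tm (PCPSym A) ℕ) :
    RewAt (pcpTRS n u v) [] (Tm.app PCPSym.hS [a, encodeStr (u i) b, encodeStr (v i) c])
      (Tm.app PCPSym.hS [a, b, c]) := by
  refine ⟨hRule u v i, hRule_mem i, sub3 a b c, ?_, ?_⟩
  · simp [hRule, Tm.subst_app, subst_encodeStr, sub3]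
  · simp [hRule, Tm.subst_app, sub3]

lemma rewAt_e (a : Tm (PCPSym A) ℕ) :
    RewAt (pcpTRS n u v) []
      (Tm.app PCPSym.hS [a, Tm.app PCPSym.eps [], Tm.app PCPSym.eps []])
      (Tm.app PCPSym.fS [a]) := by
  refine ⟨eRule, eRule_mem, sub3 a a a, ?_, ?_⟩
  · simp [eRule, Tm.subst_app, sub3]
  · simp [eRule, Tm.subst_app, sub3]

/-- left-hand sides instantiate to terms rooted in fS/gS/hS -/
lemma lhs_subst_shape {r : Rule (PCPSym A) ℕ} (hr : r ∈ pcpTRS n u v)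
    (σ : ℕ → Tm (PCPSym A) ℕ) :
    ∃ (c : PCPSym A) (args : List (Tm (PCPSym A) ℕ)),
      r.lhs.subst σ = Tm.app c args ∧
      (c = PCPSym.fS ∨ c = PCPSym.gS ∨ c = PCPSym.hS) := by
  rcases (mem_pcpTRS_iff r).1 hr with rfl | ⟨i, rfl | rfl⟩ | rfl
  · exact ⟨_, _, Tm.subst_app _ _ _, Or.inl rfl⟩
  · exact ⟨_, _, Tm.subst_app _ _ _, Or.inr (Or.inl rfl)⟩
  · exact ⟨_, _, Tm.subst_app _ _ _, Or.inr (Or.inr rfl)⟩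
  · exact ⟨_, _, Tm.subst_app _ _ _, Or.inr (Or.inr rfl)⟩

lemma rhs_subst_shape {r : Rule (PCPSym A) ℕ} (hr : r ∈ pcpTRS n u v)
    (σ : ℕ → Tm (PCPSym A) ℕ) :
    ∃ (c : PCPSym A) (args : List (Tm (PCPSym A) ℕ)),
      r.rhs.subst σ = Tm.app c args ∧
      (c = PCPSym.fS ∨ c = PCPSym.gS ∨ c = PCPSym.hS) := by
  rcases (mem_pcpTRS_iff r).1 hr with rfl | ⟨i, rfl | rfl⟩ | rfl
  · exact ⟨_, _, Tm.subst_app _ _ _, Or.inr (Or.inl rfl)⟩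
  · exact ⟨_, _, Tm.subst_app _ _ _, Or.inr (Or.inr rfl)⟩
  · exact ⟨_, _, Tm.subst_app _ _ _, Or.inr (Or.inr rfl)⟩
  · exact ⟨_, _, Tm.subst_app _ _ _, Or.inl rfl⟩

/-- pure strings are irreducible -/
lemma string_nf (w : List A) :
    NF (pcpTRS n u v) (encodeStr w (Tm.app PCPSym.eps [])) := by
  rintro ⟨t', p, r, hr, σ, hsub, -⟩
  obtain ⟨w', hw'⟩ := subAt_string w p _ hsub
  obtain ⟨c, args, hshape, hc⟩ := lhs_subst_shape hr σ
  rw [hshape] at hw'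
  match w' with
  | [] =>
    rw [show encodeStr ([]:List A) (Tm.app PCPSym.eps []) = Tm.app PCPSym.eps [] from rfl] at hw'
    obtain ⟨hce, -⟩ := Tm.app.injEq _ _ _ _ ▸ hw'
    rcases hc with rfl | rfl | rfl <;> simp_all
  | a :: w' =>
    rw [show encodeStr (a :: w') (Tm.app PCPSym.eps [])
          = Tm.app (PCPSym.letter a) [encodeStr w' (Tm.app PCPSym.eps [])] from rfl] at hw'
    obtain ⟨hce, -⟩ := Tm.app.injEq _ _ _ _ ▸ hw'
    rcases hc with rfl | rfl | rfl <;> simp_all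

lemma subAt_append (s : Tm (PCPSym A) ℕ) (q p : List ℕ) :
    s.subAt (q ++ p) = (s.subAt q).bind (fun w => w.subAt p) := by
  induction q generalizing s with
  | nil => simp
  | cons j q ih =>
    match s with
    | .var x => simp [Tm.subAt_var_cons]
    | .app f ts =>
      cases h : ts[j]? with
      | none => simp [Tm.subAt_cons_none _ _ _ _ h]
      | some x =>
        simp only [List.cons_append, Tm.subAt_cons_some _ _ _ _ _ h]
        exact ih x

lemma replAt_exists (s : Tm (PCPSym A) ℕ) (q p : List ℕ) (w x w' : Tm (PCPSym A) ℕ)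
    (hq : s.subAt q = some w) (hw : w.replAt p x = some w') :
    ∃ s', s.replAt (q ++ p) x = some s' := by
  induction q generalizing s with
  | nil =>
    simp only [Tm.subAt_nil, Option.some_inj] at hq
    subst hq
    exact ⟨w', by simpa using hw⟩
  | cons j q ih =>
    match s with
    | .var y => rw [Tm.subAt_var_cons] at hq; exact absurd hq (by simp)
    | .app f ts =>
      cases h : ts[j]? with
      | none => rw [Tm.subAt_cons_none _ _ _ _ h] at hq; exact absurd hq (by simp)
      | some y =>
        rw [Tm.subAt_cons_some _ _ _ _ _ h] at hq
        obtain ⟨y', hy'⟩ := ih y hq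
        exact ⟨Tm.app f (ts.set j y'),
          by rw [List.cons_append, Tm.replAt_cons_some _ _ _ _ _ _ h, hy']; rfl⟩

/-- normal forms are closed under subterms -/
lemma nf_subAt {s w : Tm (PCPSym A) ℕ} (hs : NF (pcpTRS n u v) s) {q : List ℕ}
    (hq : s.subAt q = some w) : NF (pcpTRS n u v) w := by
  rintro ⟨w', p, r, hr, σ, hsub, hrepl⟩
  obtain ⟨s', hs'⟩ := replAt_exists s q p w (r.rhs.subst σ) w' hq hrepl
  refine hs ⟨s', q ++ p, r, hr, σ, ?_, hs'⟩
  rw [subAt_append, hq]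
  exact hsub

end Aux4

section Aux5
open Tm PCPSym

variable {A : Type} {n : ℕ}

open Classical in
/-- potential of `h(a,b,c)` on string abstractions, with `k` ε-credits -/
noncomputable def hp (u v : Fin n → List A) :
    ℕ → (List A × Bool) → (List A × Bool) → (List A × Bool) → ℕ
  | k, sa, sb, sc =>
    if sb = ([], true) ∧ sc = ([], true) then
      match k with
      | 0 => 0
      | k + 1 => 2 + (if sa = ([], true) then 0 else hp u v k sa sa sa)
    else
      Finset.univ.sup (fun i : Fin n =>
        if h : (u i ≠ [] ∨ v i ≠ []) ∧ u i <+: sb.1 ∧ v i <+: sc.1 then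
          1 + hp u v k sa (sb.1.drop (u i).length, sb.2) (sc.1.drop (v i).length, sc.2)
        else 0)
termination_by k sa sb sc => (k, sb.1.length + sc.1.length)
decreasing_by
  · exact Prod.Lex.left _ _ (Nat.lt_succ_self k)
  · apply Prod.Lex.right
    have h1 := h.2.1.length_le
    have h2 := h.2.2.length_le
    have h3 : (u i).length ≠ 0 ∨ (v i).length ≠ 0 := by
      rcases h.1 with h' | h'
      · exact Or.inl (by simpa using h')
      · exact Or.inr (by simpa using h')
    simp only [List.length_drop]
    omega

open Classical in
/-- potential of `g(a,b,c)` -/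
noncomputable def gp (u v : Fin n → List A) (k : ℕ)
    (sa sb sc : List A × Bool) : ℕ :=
  if sb = ([], true) ∧ sc = ([], true) then 0 else hp u v k sa sb sc

end Aux5

section Aux6
open Tm PCPSym

variable {A : Type} {n : ℕ}

lemma hp_e0_zero (u v : Fin n → List A) (sa : List A × Bool) :
    hp u v 0 sa ([], true) ([], true) = 0 := by
  rw [hp]
  simp

open Classical in
lemma hp_e0_succ (u v : Fin n → List A) (k : ℕ) (sa : List A × Bool) :
    hp u v (k + 1) sa ([], true) ([], true) = 2 + gp u v k sa sa sa := by
  rw [hp]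
  rw [if_pos (show (([], true) : List A × Bool) = ([], true) ∧
      (([], true) : List A × Bool) = ([], true) from ⟨rfl, rfl⟩)]
  show 2 + (if sa = ([], true) then 0 else hp u v k sa sa sa) = _
  rw [gp]
  by_cases h : sa = ([], true)
  · rw [if_pos h, if_pos ⟨h, h⟩]
  · rw [if_neg h, if_neg (fun hc => h hc.1)]

open Classical in
lemma hp_ne (u v : Fin n → List A) (k : ℕ) (sa sb sc : List A × Bool)
    (h : ¬(sb = ([], true) ∧ sc = ([], true))) :
    hp u v k sa sb sc = Finset.univ.sup (fun i : Fin n =>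
      if (u i ≠ [] ∨ v i ≠ []) ∧ u i <+: sb.1 ∧ v i <+: sc.1 then
        1 + hp u v k sa (sb.1.drop (u i).length, sb.2) (sc.1.drop (v i).length, sc.2)
      else 0) := by
  rw [hp.eq_def]
  dsimp only
  rw [if_neg h]
  simp only [dite_eq_ite]

lemma gp_ne (u v : Fin n → List A) (k : ℕ) (sa sb sc : List A × Bool)
    (h : ¬(sb = ([], true) ∧ sc = ([], true))) :
    gp u v k sa sb sc = hp u v k sa sb sc := by
  rw [gp, if_neg h]

end Aux6

section Aux7
open Tm PCPSym

variable {A : Type} {n : ℕ}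

/-- potential of a term as a function of root symbol and argument abstractions -/
noncomputable def Q (u v : Fin n → List A) : PCPSym A → List (List A × Bool) → ℕ
  | .fS, [sa] => 1 + gp u v 1 sa sa sa
  | .gS, [sa, sb, sc] => gp u v 1 sa sb sc
  | .hS, [sa, sb, sc] => hp u v 1 sa sb sc
  | _, _ => 0

/-- potential of a term -/
noncomputable def P (u v : Fin n → List A) : Tm (PCPSym A) ℕ → ℕ
  | .var _ => 0
  | .app f ts => Q u v f (ts.map str)

/-- total measure: sum of potentials over all subterm occurrences -/
noncomputable def M (u v : Fin n → List A) : Tm (PCPSym A) ℕ → ℕ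
  | .var _ => 0
  | .app f ts => Q u v f (ts.map str) + (ts.attach.map (fun t => M u v t.1)).sum
decreasing_by all_goals (simp_wf; have := List.sizeOf_lt_of_mem t.2; omega)

lemma M_var (u v : Fin n → List A) (x : ℕ) : M u v (Tm.var x) = 0 := by rw [M]

lemma M_app (u v : Fin n → List A) (f : PCPSym A) (ts : List (Tm (PCPSym A) ℕ)) :
    M u v (Tm.app f ts) = Q u v f (ts.map str) + (ts.map (M u v)).sum := by
  rw [M]
  congr 1
  congr 1
  exact List.attach_map_val

lemma sum_map_set_lt (u v : Fin n → List A) :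
    ∀ (ts : List (Tm (PCPSym A) ℕ)) (j : ℕ) (x x' : Tm (PCPSym A) ℕ),
      ts[j]? = some x → M u v x' < M u v x →
      ((ts.set j x').map (M u v)).sum < (ts.map (M u v)).sum := by
  intro ts
  induction ts with
  | nil => intro j x x' h; simp at h
  | cons a ts ih =>
    intro j x x' h hlt
    match j with
    | 0 =>
      simp only [List.getElem?_cons_zero] at h
      injection h with h; subst h
      simp only [List.set, List.map_cons, List.sum_cons]
      omega
    | j + 1 =>
      simp only [List.getElem?_cons_succ] at h
      have := ih j x x' h hlt
      simp only [List.set, List.map_cons, List.sum_cons]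
      omega

end Aux7

section Aux8
open Tm PCPSym

variable {A : Type} {n : ℕ}

lemma Q_nf {u v : Fin n → List A} {f : PCPSym A} {ts : List (Tm (PCPSym A) ℕ)}
    (hnf : NF (pcpTRS n u v) (Tm.app f ts)) : Q u v f (ts.map str) = 0 := by
  match f, ts with
  | .letter a, ts => rfl
  | .eps, ts => rfl
  | .fS, [] => rfl
  | .fS, [a] => exact absurd ⟨_, [], rewAt_f a⟩ hnf
  | .fS, a :: b :: ts => rfl
  | .gS, [] => rfl
  | .gS, [a] => rfl
  | .gS, [a, b] => rfl
  | .gS, a :: b :: c :: d :: ts => rfl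
  | .hS, [] => rfl
  | .hS, [a] => rfl
  | .hS, [a, b] => rfl
  | .hS, a :: b :: c :: d :: ts => rfl
  | .gS, [a, b, c] =>
    show gp u v 1 (str a) (str b) (str c) = 0
    by_cases he : str b = ([], true) ∧ str c = ([], true)
    · rw [gp, if_pos he]
    · rw [gp_ne u v 1 _ _ _ he, hp_ne u v 1 _ _ _ he]
      refine Nat.le_zero.mp (Finset.sup_le fun i _ => ?_)
      have hcond : ¬((u i ≠ [] ∨ v i ≠ []) ∧ u i <+: (str b).1 ∧ v i <+: (str c).1) := by
        rintro ⟨-, hpb, hpc⟩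
        obtain ⟨b', hb', -, -⟩ := str_prefix _ _ hpb
        obtain ⟨c', hc', -, -⟩ := str_prefix _ _ hpc
        subst hb'; subst hc'
        exact absurd ⟨_, [], rewAt_g i a b' c'⟩ hnf
      rw [if_neg hcond]
  | .hS, [a, b, c] =>
    show hp u v 1 (str a) (str b) (str c) = 0
    by_cases he : str b = ([], true) ∧ str c = ([], true)
    · have hb := str_e0 he.1
      have hc := str_e0 he.2
      subst hb; subst hc
      exact absurd ⟨_, [], rewAt_e a⟩ hnf
    · rw [hp_ne u v 1 _ _ _ he]
      refine Nat.le_zero.mp (Finset.sup_le fun i _ => ?_)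
      have hcond : ¬((u i ≠ [] ∨ v i ≠ []) ∧ u i <+: (str b).1 ∧ v i <+: (str c).1) := by
        rintro ⟨-, hpb, hpc⟩
        obtain ⟨b', hb', -, -⟩ := str_prefix _ _ hpb
        obtain ⟨c', hc', -, -⟩ := str_prefix _ _ hpc
        subst hb'; subst hc'
        exact absurd ⟨_, [], rewAt_h i a b' c'⟩ hnf
      rw [if_neg hcond]

lemma M_nf' {u v : Fin n → List A} :
    ∀ (N : ℕ) (t : Tm (PCPSym A) ℕ), sizeOf t ≤ N → NF (pcpTRS n u v) t → M u v t = 0 := by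
  intro N
  induction N with
  | zero =>
    intro t ht _
    match t with
    | .var x => exact M_var u v x
    | .app f ts => simp only [Tm.app.sizeOf_spec] at ht; omega
  | succ N ih =>
    intro t ht hnf
    match t with
    | .var x => exact M_var u v x
    | .app f ts =>
      rw [M_app, Q_nf hnf, Nat.zero_add]
      refine List.sum_eq_zero ?_
      intro m hm
      obtain ⟨x, hx, rfl⟩ := List.mem_map.1 hm
      have hsz := List.sizeOf_lt_of_mem hx
      obtain ⟨j, hj, hxj⟩ := List.mem_iff_getElem.1 hx
      refine ih x ?_ (nf_subAt hnf (q := [j]) ?_)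
      · simp only [Tm.app.sizeOf_spec] at ht; omega
      · rw [Tm.subAt_cons_some f ts j [] x
          (by simp [hj, hxj])]
        exact Tm.subAt_nil x

lemma M_nf {u v : Fin n → List A} {t : Tm (PCPSym A) ℕ}
    (hnf : NF (pcpTRS n u v) t) : M u v t = 0 :=
  M_nf' (sizeOf t) t le_rfl hnf

end Aux8

section Aux9
open Tm PCPSym

variable {A : Type} {n : ℕ}

/-- simultaneous stripping relation reaching the empty pair -/
inductive StE (u v : Fin n → List A) : List A → List A → Prop
  | nil : StE u v [] []
  | cons (i : Fin n) {b c : List A} : StE u v b c → StE u v (u i ++ b) (v i ++ c)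

lemma StE_extract {u v : Fin n → List A} {b c : List A} (h : StE u v b c) :
    ∃ (k : ℕ) (idx : Fin k → Fin n),
      b = (List.ofFn fun j => u (idx j)).flatten ∧
      c = (List.ofFn fun j => v (idx j)).flatten := by
  induction h with
  | nil => exact ⟨0, Fin.elim0, by simp, by simp⟩
  | cons i hst ih =>
    obtain ⟨k, idx, hb, hc⟩ := ih
    refine ⟨k + 1, Fin.cases i idx, ?_, ?_⟩
    · simp only [List.ofFn_succ, Fin.cases_zero, Fin.cases_succ, List.flatten_cons]
      rw [← hb]
    · simp only [List.ofFn_succ, Fin.cases_zero, Fin.cases_succ, List.flatten_cons]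
      rw [← hc]

/-- the PCP instance has a solution -/
def HasSol (u v : Fin n → List A) : Prop :=
  ∃ (k : ℕ), 0 < k ∧ ∃ idx : Fin k → Fin n,
    (List.ofFn fun j => u (idx j)).flatten = (List.ofFn fun j => v (idx j)).flatten

lemma ns_guard {u v : Fin n → List A} (hNS : ¬ HasSol u v) (i : Fin n) :
    u i ≠ [] ∨ v i ≠ [] := by
  by_contra h
  push_neg at h
  exact hNS ⟨1, Nat.one_pos, fun _ => i, by simp [h.1, h.2]⟩

/-- `Bad sb sc`: the pair of abstractions can be stripped to `(ε, ε)` -/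
def Bad (u v : Fin n → List A) (sb sc : List A × Bool) : Prop :=
  sb.2 = true ∧ sc.2 = true ∧ StE u v sb.1 sc.1

lemma hp_indep {u v : Fin n → List A} :
    ∀ (N : ℕ) (k : ℕ) (sa sb sc : List A × Bool),
      sb.1.length + sc.1.length ≤ N → ¬ Bad u v sb sc →
      hp u v (k + 1) sa sb sc = hp u v k sa sb sc := by
  intro N
  induction N using Nat.strong_induction_on with
  | _ N ih =>
    intro k sa sb sc hlen hbad
    have hne : ¬(sb = ([], true) ∧ sc = ([], true)) := by
      rintro ⟨h1, h2⟩
      exact hbad ⟨by rw [h1], by rw [h2], by rw [h1, h2]; exact StE.nil⟩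
    rw [hp_ne u v _ _ _ _ hne, hp_ne u v _ _ _ _ hne]
    refine Finset.sup_congr rfl (fun i _ => ?_)
    by_cases hc : (u i ≠ [] ∨ v i ≠ []) ∧ u i <+: sb.1 ∧ v i <+: sc.1
    · rw [if_pos hc, if_pos hc]
      congr 1
      obtain ⟨rb, hrb⟩ := hc.2.1
      obtain ⟨rc, hrc⟩ := hc.2.2
      have hdb : sb.1.drop (u i).length = rb := by rw [← hrb, List.drop_left]
      have hdc : sc.1.drop (v i).length = rc := by rw [← hrc, List.drop_left]
      have hlt : rb.length + rc.length < N := by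
        have h1 : (u i).length + rb.length = sb.1.length := by
          rw [← hrb, List.length_append]
        have h2 : (v i).length + rc.length = sc.1.length := by
          rw [← hrc, List.length_append]
        have h3 : (u i).length ≠ 0 ∨ (v i).length ≠ 0 := by
          rcases hc.1 with h' | h'
          · exact Or.inl (by simpa using h')
          · exact Or.inr (by simpa using h')
        omega
      rw [hdb, hdc]
      refine ih (rb.length + rc.length) hlt k sa (rb, sb.2) (rc, sc.2) le_rfl ?_
      rintro ⟨h1, h2, hst⟩
      exact hbad ⟨h1, h2, by rw [← hrb, ← hrc]; exact StE.cons i hst⟩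
    · rw [if_neg hc, if_neg hc]

lemma gp_diag {u v : Fin n → List A} (hNS : ¬ HasSol u v) (sa : List A × Bool) :
    gp u v 1 sa sa sa = gp u v 0 sa sa sa := by
  by_cases h : sa = ([], true)
  · rw [gp, gp, if_pos ⟨h, h⟩, if_pos ⟨h, h⟩]
  · have hbad : ¬ Bad u v sa sa := by
      rintro ⟨h2, -, hst⟩
      obtain ⟨k, idx, h1, h1'⟩ := StE_extract hst
      match k with
      | 0 =>
        apply h
        have : sa.1 = [] := by simpa using h1
        obtain ⟨x, y⟩ := sa
        simp only [Prod.mk.injEq]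
        exact ⟨this, h2⟩
      | k + 1 => exact hNS ⟨k + 1, Nat.succ_pos k, idx, h1 ▸ h1' ▸ rfl⟩
    rw [gp_ne u v _ _ _ _ (fun hc => h hc.1), gp_ne u v _ _ _ _ (fun hc => h hc.1)]
    exact hp_indep (sa.1.length + sa.1.length) 0 sa sa sa le_rfl hbad

end Aux9

section Aux10
open Tm PCPSym

variable {A : Type} {n : ℕ}

lemma str_fgh {c : PCPSym A} (hc : c = PCPSym.fS ∨ c = PCPSym.gS ∨ c = PCPSym.hS)
    (args : List (Tm (PCPSym A) ℕ)) : str (Tm.app c args) = ([], false) := by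
  rcases str_cases (Tm.app c args) with ⟨b, t', heq⟩ | heq | ⟨h0, -, -⟩
  · obtain ⟨hcb, -⟩ := Tm.app.injEq _ _ _ _ ▸ heq
    rcases hc with rfl | rfl | rfl <;> simp_all
  · obtain ⟨hcb, -⟩ := Tm.app.injEq _ _ _ _ ▸ heq
    rcases hc with rfl | rfl | rfl <;> simp_all
  · exact h0

lemma rew_str {u v : Fin n → List A} :
    ∀ (p : List ℕ) (a a' : Tm (PCPSym A) ℕ),
      RewAt (pcpTRS n u v) p a a' → str a' = str a := by
  intro p
  induction p with
  | nil =>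
    rintro a a' ⟨r, hr, σ, hsub, hrepl⟩
    rw [Tm.subAt_nil] at hsub
    injection hsub with hsub
    rw [Tm.replAt_nil] at hrepl
    injection hrepl with hrepl
    subst hsub; subst hrepl
    obtain ⟨c, args, hl, hc⟩ := lhs_subst_shape hr σ
    obtain ⟨c', args', hr', hc'⟩ := rhs_subst_shape hr σ
    rw [hl, hr', str_fgh hc, str_fgh hc']
  | cons j p' ih =>
    rintro a a' ⟨r, hr, σ, hsub, hrepl⟩
    match a with
    | .var x =>
      rw [Tm.subAt_var_cons] at hsub
      exact absurd hsub (by simp)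
    | .app f ts =>
      cases hg : ts[j]? with
      | none =>
        rw [Tm.subAt_cons_none _ _ _ _ hg] at hsub
        exact absurd hsub (by simp)
      | some x =>
        rw [Tm.subAt_cons_some _ _ _ _ _ hg] at hsub
        rw [Tm.replAt_cons_some _ _ _ _ _ _ hg] at hrepl
        cases hx : x.replAt p' (r.rhs.subst σ) with
        | none => rw [hx] at hrepl; exact absurd hrepl (by simp)
        | some x' =>
          rw [hx] at hrepl
          simp only [Option.map_some, Option.some_inj] at hrepl
          subst hrepl
          have hstep : str x' = str x := ih x x' ⟨r, hr, σ, hsub, hx⟩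
          rcases str_cases (Tm.app f ts) with ⟨b, t', heq⟩ | heq | ⟨h0, hne, hnl⟩
          · obtain ⟨hfb, hts⟩ := Tm.app.injEq _ _ _ _ ▸ heq
            subst hfb; subst hts
            match j, hg with
            | 0, hg =>
              simp only [List.getElem?_cons_zero] at hg
              injection hg with hg
              subst hg
              simp [hstep]
          · obtain ⟨-, hts⟩ := Tm.app.injEq _ _ _ _ ▸ heq
            subst hts
            simp at hg
          · rw [h0]
            rcases str_cases (Tm.app f (ts.set j x')) with ⟨b, t', heq'⟩ | heq' | ⟨h0', -, -⟩
            · obtain ⟨hfb, hts⟩ := Tm.app.injEq _ _ _ _ ▸ heq'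
              subst hfb
              have hlen : ts.length = 1 := by
                have := congrArg List.length hts
                simpa using this
              match ts, hlen with
              | [w], _ => exact absurd rfl (hnl b w)
            · obtain ⟨-, hts⟩ := Tm.app.injEq _ _ _ _ ▸ heq'
              have hlen : ts.length = 0 := by
                have := congrArg List.length hts
                simpa using this
              rw [List.length_eq_zero_iff.1 hlen] at hg
              simp at hg
            · exact h0'

lemma map_str_set :
    ∀ (ts : List (Tm (PCPSym A) ℕ)) (j : ℕ) (x x' : Tm (PCPSym A) ℕ),
      ts[j]? = some x → str x' = str x →
      (ts.set j x').map str = ts.map str := by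
  intro ts
  induction ts with
  | nil => intro j x x' h; simp at h
  | cons a ts ih =>
    intro j x x' h hs
    match j with
    | 0 =>
      simp only [List.getElem?_cons_zero] at h
      injection h with h
      subst h
      simp [List.set, hs]
    | j + 1 =>
      simp only [List.getElem?_cons_succ] at h
      simp [List.set, ih j x x' h hs]

end Aux10

section Aux11
open Tm PCPSym

variable {A : Type} {n : ℕ}

lemma hp_strip {u v : Fin n → List A} (hNS : ¬ HasSol u v) (i : Fin n)
    (sa : List A × Bool) (wb wc : List A) (eb ec : Bool) :
    1 + hp u v 1 sa (wb, eb) (wc, ec) ≤ hp u v 1 sa (u i ++ wb, eb) (v i ++ wc, ec) := by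
  have hg := ns_guard hNS i
  have hne : ¬(((u i ++ wb, eb) : List A × Bool) = ([], true) ∧
      ((v i ++ wc, ec) : List A × Bool) = ([], true)) := by
    rintro ⟨h1, h2⟩
    rcases hg with h | h
    · apply h
      have := congrArg Prod.fst h1
      simpa using (List.append_eq_nil_iff.1 (by simpa using this)).1
    · apply h
      have := congrArg Prod.fst h2
      simpa using (List.append_eq_nil_iff.1 (by simpa using this)).1
  rw [hp_ne u v _ _ _ _ hne]
  have hcond : (u i ≠ [] ∨ v i ≠ []) ∧
      u i <+: ((u i ++ wb, eb) : List A × Bool).1 ∧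
      v i <+: ((v i ++ wc, ec) : List A × Bool).1 := ⟨hg, ⟨wb, rfl⟩, ⟨wc, rfl⟩⟩
  refine le_trans (le_of_eq ?_) (Finset.le_sup (Finset.mem_univ i))
  rw [if_pos hcond]
  simp [List.drop_left]

lemma gp_strip {u v : Fin n → List A} (hNS : ¬ HasSol u v) (i : Fin n)
    (sa : List A × Bool) (wb wc : List A) (eb ec : Bool) :
    1 + hp u v 1 sa (wb, eb) (wc, ec) ≤ gp u v 1 sa (u i ++ wb, eb) (v i ++ wc, ec) := by
  have hne : ¬(((u i ++ wb, eb) : List A × Bool) = ([], true) ∧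
      ((v i ++ wc, ec) : List A × Bool) = ([], true)) := by
    rintro ⟨h1, h2⟩
    rcases ns_guard hNS i with h | h
    · apply h
      have := congrArg Prod.fst h1
      simpa using (List.append_eq_nil_iff.1 (by simpa using this)).1
    · apply h
      have := congrArg Prod.fst h2
      simpa using (List.append_eq_nil_iff.1 (by simpa using this)).1
  rw [gp_ne u v _ _ _ _ hne]
  exact hp_strip hNS i sa wb wc eb ec

lemma step_dec {u v : Fin n → List A} (hNS : ¬ HasSol u v) :
    ∀ (p : List ℕ) (s t : Tm (PCPSym A) ℕ),
      RewAt (pcpTRS n u v) p s t →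
      (∀ (q : List ℕ) (w : Tm (PCPSym A) ℕ), q ≠ [] → s.subAt (p ++ q) = some w →
        NF (pcpTRS n u v) w) →
      M u v t < M u v s := by
  intro p
  induction p with
  | nil =>
    rintro s t ⟨r, hr, σ, hsub, hrepl⟩ hinner
    rw [Tm.subAt_nil] at hsub
    injection hsub with hsub
    rw [Tm.replAt_nil] at hrepl
    injection hrepl with hrepl
    subst hsub; subst hrepl
    rcases (mem_pcpTRS_iff r).1 hr with rfl | ⟨i, rfl | rfl⟩ | rfl
    · -- f rule
      have hs : fRule.lhs.subst σ = Tm.app PCPSym.fS [σ 0] := by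
        simp [fRule, Tm.subst_app]
      have ht : (fRule (A := A)).rhs.subst σ = Tm.app PCPSym.gS [σ 0, σ 0, σ 0] := by
        simp [fRule, Tm.subst_app]
      have hnf0 : NF (pcpTRS n u v) (σ 0) := by
        refine hinner [0] (σ 0) (by simp) ?_
        rw [List.nil_append, hs]
        rw [Tm.subAt_cons_some _ _ 0 [] (σ 0) (by rfl)]
        exact Tm.subAt_nil _
      rw [hs, ht, M_app, M_app]
      simp only [List.map_cons, List.map_nil, List.sum_cons, List.sum_nil, M_nf hnf0]
      show gp u v 1 (str (σ 0)) (str (σ 0)) (str (σ 0)) + _ <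
        1 + gp u v 1 (str (σ 0)) (str (σ 0)) (str (σ 0)) + _
      omega
    · -- g rule
      have hs : (gRule u v i).lhs.subst σ =
          Tm.app PCPSym.gS [σ 0, encodeStr (u i) (σ 1), encodeStr (v i) (σ 2)] := by
        simp [gRule, Tm.subst_app, subst_encodeStr]
      have ht : (gRule u v i).rhs.subst σ = Tm.app PCPSym.hS [σ 0, σ 1, σ 2] := by
        simp [gRule, Tm.subst_app]
      have hnf0 : NF (pcpTRS n u v) (σ 0) := by
        refine hinner [0] (σ 0) (by simp) ?_
        rw [List.nil_append, hs]
        rw [Tm.subAt_cons_some _ _ 0 [] (σ 0) (by rfl)]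
        exact Tm.subAt_nil _
      have hnfb : NF (pcpTRS n u v) (encodeStr (u i) (σ 1)) := by
        refine hinner [1] _ (by simp) ?_
        rw [List.nil_append, hs]
        rw [Tm.subAt_cons_some _ _ 1 [] (encodeStr (u i) (σ 1)) (by rfl)]
        exact Tm.subAt_nil _
      have hnfc : NF (pcpTRS n u v) (encodeStr (v i) (σ 2)) := by
        refine hinner [2] _ (by simp) ?_
        rw [List.nil_append, hs]
        rw [Tm.subAt_cons_some _ _ 2 [] (encodeStr (v i) (σ 2)) (by rfl)]
        exact Tm.subAt_nil _
      have hnf1 : NF (pcpTRS n u v) (σ 1) := nf_subAt hnfb (subAt_encodeStr (u i) (σ 1))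
      have hnf2 : NF (pcpTRS n u v) (σ 2) := nf_subAt hnfc (subAt_encodeStr (v i) (σ 2))
      rw [hs, ht, M_app, M_app]
      simp only [List.map_cons, List.map_nil, List.sum_cons, List.sum_nil,
        M_nf hnf0, M_nf hnfb, M_nf hnfc, M_nf hnf1, M_nf hnf2]
      show hp u v 1 (str (σ 0)) (str (σ 1)) (str (σ 2)) + _ <
        gp u v 1 (str (σ 0)) (str (encodeStr (u i) (σ 1))) (str (encodeStr (v i) (σ 2))) + _
      rw [str_encodeStr, str_encodeStr]
      have hst := gp_strip hNS i (str (σ 0)) (str (σ 1)).1 (str (σ 2)).1 (str (σ 1)).2 (str (σ 2)).2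
      rw [Prod.mk.eta, Prod.mk.eta] at hst
      omega
    · -- h rule
      have hs : (hRule u v i).lhs.subst σ =
          Tm.app PCPSym.hS [σ 0, encodeStr (u i) (σ 1), encodeStr (v i) (σ 2)] := by
        simp [hRule, Tm.subst_app, subst_encodeStr]
      have ht : (hRule u v i).rhs.subst σ = Tm.app PCPSym.hS [σ 0, σ 1, σ 2] := by
        simp [hRule, Tm.subst_app]
      have hnf0 : NF (pcpTRS n u v) (σ 0) := by
        refine hinner [0] (σ 0) (by simp) ?_
        rw [List.nil_append, hs]
        rw [Tm.subAt_cons_some _ _ 0 [] (σ 0) (by rfl)]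
        exact Tm.subAt_nil _
      have hnfb : NF (pcpTRS n u v) (encodeStr (u i) (σ 1)) := by
        refine hinner [1] _ (by simp) ?_
        rw [List.nil_append, hs]
        rw [Tm.subAt_cons_some _ _ 1 [] (encodeStr (u i) (σ 1)) (by rfl)]
        exact Tm.subAt_nil _
      have hnfc : NF (pcpTRS n u v) (encodeStr (v i) (σ 2)) := by
        refine hinner [2] _ (by simp) ?_
        rw [List.nil_append, hs]
        rw [Tm.subAt_cons_some _ _ 2 [] (encodeStr (v i) (σ 2)) (by rfl)]
        exact Tm.subAt_nil _
      have hnf1 : NF (pcpTRS n u v) (σ 1) := nf_subAt hnfb (subAt_encodeStr (u i) (σ 1))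
      have hnf2 : NF (pcpTRS n u v) (σ 2) := nf_subAt hnfc (subAt_encodeStr (v i) (σ 2))
      rw [hs, ht, M_app, M_app]
      simp only [List.map_cons, List.map_nil, List.sum_cons, List.sum_nil,
        M_nf hnf0, M_nf hnfb, M_nf hnfc, M_nf hnf1, M_nf hnf2]
      show hp u v 1 (str (σ 0)) (str (σ 1)) (str (σ 2)) + _ <
        hp u v 1 (str (σ 0)) (str (encodeStr (u i) (σ 1))) (str (encodeStr (v i) (σ 2))) + _
      rw [str_encodeStr, str_encodeStr]
      have hst := hp_strip hNS i (str (σ 0)) (str (σ 1)).1 (str (σ 2)).1 (str (σ 1)).2 (str (σ 2)).2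
      rw [Prod.mk.eta, Prod.mk.eta] at hst
      omega
    · -- ε rule
      have hs : (eRule (A := A)).lhs.subst σ =
          Tm.app PCPSym.hS [σ 0, Tm.app PCPSym.eps [], Tm.app PCPSym.eps []] := by
        simp [eRule, Tm.subst_app]
      have ht : (eRule (A := A)).rhs.subst σ = Tm.app PCPSym.fS [σ 0] := by
        simp [eRule, Tm.subst_app]
      have hnf0 : NF (pcpTRS n u v) (σ 0) := by
        refine hinner [0] (σ 0) (by simp) ?_
        rw [List.nil_append, hs]
        rw [Tm.subAt_cons_some _ _ 0 [] (σ 0) (by rfl)]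
        exact Tm.subAt_nil _
      rw [hs, ht, M_app, M_app]
      simp only [List.map_cons, List.map_nil, List.sum_cons, List.sum_nil, M_nf hnf0]
      show 1 + gp u v 1 (str (σ 0)) (str (σ 0)) (str (σ 0)) + _ <
        hp u v 1 (str (σ 0)) ([], true) ([], true) + _
      have he := hp_e0_succ u v 0 (str (σ 0))
      have hd := gp_diag hNS (str (σ 0))
      simp only [Nat.zero_add] at he
      omega
  | cons j p' ih =>
    rintro s t ⟨r, hr, σ, hsub, hrepl⟩ hinner
    match s with
    | .var x =>
      rw [Tm.subAt_var_cons] at hsub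
      exact absurd hsub (by simp)
    | .app f ts =>
      cases hg : ts[j]? with
      | none =>
        rw [Tm.subAt_cons_none _ _ _ _ hg] at hsub
        exact absurd hsub (by simp)
      | some x =>
        rw [Tm.subAt_cons_some _ _ _ _ _ hg] at hsub
        rw [Tm.replAt_cons_some _ _ _ _ _ _ hg] at hrepl
        cases hx : x.replAt p' (r.rhs.subst σ) with
        | none => rw [hx] at hrepl; exact absurd hrepl (by simp)
        | some x' =>
          rw [hx] at hrepl
          simp only [Option.map_some, Option.some_inj] at hrepl
          subst hrepl
          have hra : RewAt (pcpTRS n u v) p' x x' := ⟨r, hr, σ, hsub, hx⟩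
          have hlt : M u v x' < M u v x := by
            refine ih x x' hra ?_
            intro q w hq hw
            refine hinner q w hq ?_
            rw [List.cons_append, Tm.subAt_cons_some _ _ _ _ _ hg]
            exact hw
          rw [M_app, M_app, map_str_set ts j x x' hg (rew_str p' x x' hra)]
          have := sum_map_set_lt u v ts j x x' hg hlt
          omega

end Aux11

section Aux12
open Tm PCPSym

variable {A : Type} {n : ℕ}

lemma inner_nf {u v : Fin n → List A} (X : PCPSym A) (args : List (Tm (PCPSym A) ℕ))
    (hargs : ∀ x ∈ args, ∃ w, x = encodeStr w (Tm.app PCPSym.eps []))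
    (q : List ℕ) (w : Tm (PCPSym A) ℕ) (hq : q ≠ [])
    (hw : (Tm.app X args).subAt q = some w) : NF (pcpTRS n u v) w := by
  match q, hq with
  | j :: q', _ =>
    cases hg : args[j]? with
    | none => rw [Tm.subAt_cons_none _ _ _ _ hg] at hw; exact absurd hw (by simp)
    | some x =>
      rw [Tm.subAt_cons_some _ _ _ _ _ hg] at hw
      obtain ⟨wx, rfl⟩ := hargs x (List.mem_of_getElem? hg)
      obtain ⟨w', rfl⟩ := subAt_string wx q' w hw
      exact string_nf w'

/-- the cyclic derivation witnessing innermost non-termination -/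
noncomputable def cyc (u v : Fin n → List A) (k : ℕ) (idx : Fin k → Fin n) (m : ℕ) :
    Tm (PCPSym A) ℕ :=
  if m = 0 then
    Tm.app PCPSym.fS [encodeStr (List.ofFn fun j => u (idx j)).flatten (Tm.app PCPSym.eps [])]
  else if m = 1 then
    Tm.app PCPSym.gS [encodeStr (List.ofFn fun j => u (idx j)).flatten (Tm.app PCPSym.eps []),
      encodeStr (List.ofFn fun j => u (idx j)).flatten (Tm.app PCPSym.eps []),
      encodeStr (List.ofFn fun j => u (idx j)).flatten (Tm.app PCPSym.eps [])]
  else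
    Tm.app PCPSym.hS [encodeStr (List.ofFn fun j => u (idx j)).flatten (Tm.app PCPSym.eps []),
      encodeStr (((List.ofFn fun j => u (idx j)).drop (m - 1)).flatten) (Tm.app PCPSym.eps []),
      encodeStr (((List.ofFn fun j => v (idx j)).drop (m - 1)).flatten) (Tm.app PCPSym.eps [])]

lemma flatten_drop_eq {α : Type} (l : List (List α)) (m : ℕ) (hm : m < l.length) :
    (l.drop m).flatten = l[m] ++ (l.drop (m + 1)).flatten := by
  rw [List.drop_eq_getElem_cons hm, List.flatten_cons]

lemma cyc_step {u v : Fin n → List A} (k : ℕ) (hk : 0 < k) (idx : Fin k → Fin n)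
    (heq : (List.ofFn fun j => u (idx j)).flatten = (List.ofFn fun j => v (idx j)).flatten)
    (m : ℕ) (hm : m ≤ k + 1) :
    IRew (pcpTRS n u v) (cyc u v k idx m)
      (cyc u v k idx (if m = k + 1 then 0 else m + 1)) := by
  set U : List (List A) := List.ofFn fun j => u (idx j) with hU
  set V : List (List A) := List.ofFn fun j => v (idx j) with hV
  have hUlen : U.length = k := by rw [hU, List.length_ofFn]
  have hVlen : V.length = k := by rw [hV, List.length_ofFn]
  set a : Tm (PCPSym A) ℕ := encodeStr U.flatten (Tm.app PCPSym.eps []) with ha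
  rcases Nat.lt_or_ge m 2 with hm2 | hm2
  · match m, hm2 with
    | 0, _ =>
      -- f step
      have h0 : cyc u v k idx 0 = Tm.app PCPSym.fS [a] := by rw [cyc]; simp [ha, hU, hV]
      have h1 : (if (0 : ℕ) = k + 1 then (0:ℕ) else 1) = 1 := by
        rw [if_neg (by omega)]
      rw [h1]
      have hc1 : cyc u v k idx 1 = Tm.app PCPSym.gS [a, a, a] := by rw [cyc]; simp [ha, hU, hV]
      rw [h0, hc1]
      refine ⟨[], rewAt_f a, ?_⟩
      intro q w hq hw
      rw [List.nil_append] at hw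
      exact inner_nf _ _ (by intro x hx; simp at hx; exact ⟨U.flatten, hx⟩) q w hq hw
    | 1, _ =>
      -- g step
      have h1 : (if (1 : ℕ) = k + 1 then (0:ℕ) else 2) = 2 := by
        rw [if_neg (by omega)]
      rw [h1]
      have hc1 : cyc u v k idx 1 = Tm.app PCPSym.gS [a, a, a] := by rw [cyc]; simp [ha, hU, hV]
      have hc2 : cyc u v k idx 2 = Tm.app PCPSym.hS [a,
          encodeStr ((U.drop 1).flatten) (Tm.app PCPSym.eps []),
          encodeStr ((V.drop 1).flatten) (Tm.app PCPSym.eps [])] := by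
        rw [cyc]; simp [ha, hU, hV]
      rw [hc1, hc2]
      have hu0 : U.flatten = u (idx ⟨0, hk⟩) ++ (U.drop 1).flatten := by
        have := flatten_drop_eq U 0 (by omega)
        simpa [hU] using this
      have hv0 : V.flatten = v (idx ⟨0, hk⟩) ++ (V.drop 1).flatten := by
        have := flatten_drop_eq V 0 (by omega)
        simpa [hV] using this
      have hau : a = encodeStr (u (idx ⟨0, hk⟩))
          (encodeStr ((U.drop 1).flatten) (Tm.app PCPSym.eps [])) := by
        rw [ha, hu0, encodeStr_append]
      have hav : a = encodeStr (v (idx ⟨0, hk⟩))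
          (encodeStr ((V.drop 1).flatten) (Tm.app PCPSym.eps [])) := by
        rw [ha, heq, hv0, encodeStr_append]
      refine ⟨[], ?_, ?_⟩
      · conv_lhs => rw [show Tm.app PCPSym.gS [a, a, a] = Tm.app PCPSym.gS [a,
          encodeStr (u (idx ⟨0, hk⟩)) (encodeStr ((U.drop 1).flatten) (Tm.app PCPSym.eps [])),
          encodeStr (v (idx ⟨0, hk⟩)) (encodeStr ((V.drop 1).flatten) (Tm.app PCPSym.eps []))]
          from by rw [← hau, ← hav]]
        exact rewAt_g (idx ⟨0, hk⟩) a _ _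
      · intro q w hq hw
        rw [List.nil_append] at hw
        refine inner_nf _ _ ?_ q w hq hw
        intro x hx
        simp only [List.mem_cons, List.not_mem_nil, or_false] at hx
        rcases hx with rfl | rfl | rfl
        · exact ⟨U.flatten, rfl⟩
        · exact ⟨U.flatten, rfl⟩
        · exact ⟨U.flatten, rfl⟩
  · rcases Nat.lt_or_ge m (k + 1) with hmk | hmk
    · -- h strip step, 2 ≤ m ≤ k
      have h1 : (if m = k + 1 then (0:ℕ) else m + 1) = m + 1 := by
        rw [if_neg (by omega)]
      rw [h1]
      have hmlt : m - 1 < k := by omega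
      have hcm : cyc u v k idx m = Tm.app PCPSym.hS [a,
          encodeStr ((U.drop (m - 1)).flatten) (Tm.app PCPSym.eps []),
          encodeStr ((V.drop (m - 1)).flatten) (Tm.app PCPSym.eps [])] := by
        rw [cyc]; rw [if_neg (by omega), if_neg (by omega)]
      have hcm1 : cyc u v k idx (m + 1) = Tm.app PCPSym.hS [a,
          encodeStr ((U.drop m).flatten) (Tm.app PCPSym.eps []),
          encodeStr ((V.drop m).flatten) (Tm.app PCPSym.eps [])] := by
        rw [cyc]; rw [if_neg (by omega), if_neg (by omega)]
        simp [ha, hU, hV]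
      rw [hcm, hcm1]
      have hiu : (U.drop (m - 1)).flatten = u (idx ⟨m - 1, hmlt⟩) ++ (U.drop m).flatten := by
        have := flatten_drop_eq U (m - 1) (by omega)
        rw [show m - 1 + 1 = m from by omega] at this
        rw [this]
        congr 2
        simp [hU, List.getElem_ofFn]
      have hiv : (V.drop (m - 1)).flatten = v (idx ⟨m - 1, hmlt⟩) ++ (V.drop m).flatten := by
        have := flatten_drop_eq V (m - 1) (by omega)
        rw [show m - 1 + 1 = m from by omega] at this
        rw [this]
        congr 2
        simp [hV, List.getElem_ofFn]
      refine ⟨[], ?_, ?_⟩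
      · conv_lhs => rw [hiu, hiv, encodeStr_append, encodeStr_append]
        exact rewAt_h (idx ⟨m - 1, hmlt⟩) a _ _
      · intro q w hq hw
        rw [List.nil_append] at hw
        refine inner_nf _ _ ?_ q w hq hw
        intro x hx
        simp only [List.mem_cons, List.not_mem_nil, or_false] at hx
        rcases hx with rfl | rfl | rfl
        · exact ⟨U.flatten, rfl⟩
        · exact ⟨(U.drop (m - 1)).flatten, rfl⟩
        · exact ⟨(V.drop (m - 1)).flatten, rfl⟩
    · -- ε step, m = k + 1
      have hmk1 : m = k + 1 := by omega
      subst hmk1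
      rw [if_pos rfl]
      have hcm : cyc u v k idx (k + 1) = Tm.app PCPSym.hS [a,
          Tm.app PCPSym.eps [], Tm.app PCPSym.eps []] := by
        rw [cyc]; rw [if_neg (by omega), if_neg (by omega)]
        have hdU : U.drop (k + 1 - 1) = [] := by
          rw [show k + 1 - 1 = k from rfl, ← hUlen, List.drop_length]
        have hdV : V.drop (k + 1 - 1) = [] := by
          rw [show k + 1 - 1 = k from rfl, ← hVlen, List.drop_length]
        rw [hdU, hdV]
        rw [show ([] : List (List A)).flatten = ([] : List A) from rfl]
        rw [show encodeStr ([] : List A) (Tm.app PCPSym.eps [] : Tm (PCPSym A) ℕ)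
          = Tm.app PCPSym.eps [] from by rw [encodeStr]]
      have hc0 : cyc u v k idx 0 = Tm.app PCPSym.fS [a] := by rw [cyc]; simp [ha, hU, hV]
      rw [hcm, hc0]
      refine ⟨[], rewAt_e a, ?_⟩
      intro q w hq hw
      rw [List.nil_append] at hw
      refine inner_nf _ _ ?_ q w hq hw
      intro x hx
      simp only [List.mem_cons, List.not_mem_nil, or_false] at hx
      rcases hx with rfl | rfl | rfl
      · exact ⟨U.flatten, rfl⟩
      · exact ⟨[], by rw [encodeStr]⟩
      · exact ⟨[], by rw [encodeStr]⟩

end Aux12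

/-- The TRS of the reduction is right-flat, and it is innermost
non-terminating iff the PCP instance has a solution. -/
theorem stmt18 {A : Type} (n : ℕ) (u v : Fin n → List A) :
    (∀ r ∈ pcpTRS n u v, r.RightFlat) ∧
    ((∃ f : ℕ → Tm (PCPSym A) ℕ, ∀ k, IRew (pcpTRS n u v) (f k) (f (k + 1))) ↔
      ∃ (k : ℕ), 0 < k ∧ ∃ idx : Fin k → Fin n,
        (List.ofFn fun j => u (idx j)).flatten =
          (List.ofFn fun j => v (idx j)).flatten) := by
  constructor
  · intro r hr
    rcases (mem_pcpTRS_iff r).1 hr with rfl | ⟨i, rfl | rfl⟩ | rfl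
    · show (Tm.app PCPSym.gS [Tm.var 0, Tm.var 0, Tm.var 0] : Tm (PCPSym A) ℕ).height ≤ 1
      rw [Tm.height]; simp [Tm.height]
    · show (Tm.app PCPSym.hS [Tm.var 0, Tm.var 1, Tm.var 2] : Tm (PCPSym A) ℕ).height ≤ 1
      rw [Tm.height]; simp [Tm.height]
    · show (Tm.app PCPSym.hS [Tm.var 0, Tm.var 1, Tm.var 2] : Tm (PCPSym A) ℕ).height ≤ 1
      rw [Tm.height]; simp [Tm.height]
    · show (Tm.app PCPSym.fS [Tm.var 0] : Tm (PCPSym A) ℕ).height ≤ 1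
      rw [Tm.height]; simp [Tm.height]
  · constructor
    · rintro ⟨f, hf⟩
      by_contra hNS
      have hdec : ∀ m, M u v (f (m + 1)) < M u v (f m) := by
        intro m
        obtain ⟨p, hra, hin⟩ := hf m
        exact step_dec hNS p _ _ hra hin
      have hle : ∀ m, M u v (f m) + m ≤ M u v (f 0) := by
        intro m
        induction m with
        | zero => omega
        | succ m ih => have := hdec m; omega
      have := hle (M u v (f 0) + 1)
      omega
    · rintro ⟨k, hk, idx, heq⟩
      refine ⟨fun m => cyc u v k idx (m % (k + 2)), fun m => ?_⟩
      have hlt : m % (k + 2) < k + 2 := Nat.mod_lt _ (by omega)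
      have hstep : (m + 1) % (k + 2) = (m % (k + 2) + 1) % (k + 2) := by
        conv_lhs => rw [Nat.add_mod]
        rw [Nat.mod_eq_of_lt (show 1 < k + 2 by omega)]
      have hnext : (m + 1) % (k + 2) =
          if m % (k + 2) = k + 1 then 0 else m % (k + 2) + 1 := by
        by_cases h : m % (k + 2) = k + 1
        · rw [if_pos h, hstep, h, Nat.mod_self]
        · rw [if_neg h, hstep, Nat.mod_eq_of_lt (by omega)]
      show IRew (pcpTRS n u v) (cyc u v k idx (m % (k + 2)))
        (cyc u v k idx ((m + 1) % (k + 2)))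
      rw [hnext]
      exact cyc_step k hk idx heq (m % (k + 2)) (by omega)
end

section
/- If R is a TRS in which every rule is height-preserving or height-decreasing (i.e., height(σ(r)) ≤ height(σ(l)) for every rule l → r and substitution σ used), and R is non-terminating, then there exists an infinite R-derivation containing infinitely many rewrite steps at the root position λ. -/
section Aux
variable {F V : Type}
open Tm

lemma height_app (f : F) (ts : List (Tm F V)) :
    (Tm.app f ts).height = ts.foldr (fun t m => max (t.height + 1) m) 0 := by
  rw [Tm.height]
  exact List.foldr_attach (l := ts) (f := fun t m => max (t.height + 1) m) (b := 0)

lemma height_mem_lt {ts : List (Tm F V)} {t : Tm F V} (h : t ∈ ts) (f : F) :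
    t.height < (Tm.app f ts).height := by
  rw [height_app]
  induction ts with
  | nil => cases h
  | cons a l ih =>
    simp only [List.foldr_cons]
    rcases List.mem_cons.1 h with rfl | h
    · omega
    · have := ih h; omega


lemma foldr_height_set_le {u u' : Tm F V} (hle : u'.height ≤ u.height) :
    ∀ (ts : List (Tm F V)) (i : ℕ), ts[i]? = some u →
    (ts.set i u').foldr (fun t m => max (t.height + 1) m) 0 ≤
      ts.foldr (fun t m => max (t.height + 1) m) 0 := by
  intro ts
  induction ts with
  | nil => intro i h; simp at h
  | cons a l ih =>
    intro i h
    cases i with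
    | zero =>
      simp only [List.getElem?_cons_zero] at h
      injection h with h; subst h
      simp only [List.set, List.foldr_cons]
      omega
    | succ j =>
      simp only [List.getElem?_cons_succ] at h
      have := ih j h
      simp only [List.set, List.foldr_cons]
      omega

lemma height_repl : ∀ (p : List ℕ) {s t u u' : Tm F V}, s.subAt p = some u →
    s.replAt p u' = some t → u'.height ≤ u.height → t.height ≤ s.height := by
  intro p
  induction p with
  | nil =>
    intro s t u u' h1 h2 h3
    simp only [Tm.subAt] at h1
    simp only [Tm.replAt] at h2
    injection h1 with h1; injection h2 with h2
    subst h1; subst h2; exact h3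
  | cons i q ih =>
    intro s t u u' h1 h2 h3
    cases s with
    | var x => simp [Tm.subAt] at h1
    | app f ts =>
      cases hg : ts[i]? with
      | none => simp [Tm.subAt, hg] at h1
      | some w =>
        simp only [Tm.subAt, hg] at h1
        simp only [Tm.replAt, hg, Option.map_eq_some_iff] at h2
        obtain ⟨w', hw', rfl⟩ := h2
        have hww : w'.height ≤ w.height := by
          have := ih h1 hw' h3
          exact this
        rw [height_app, height_app]
        exact foldr_height_set_le hww ts i (by simpa using hg)

lemma rew_height_le {R : Set (Rule F V)}
    (hR : ∀ r ∈ R, ∀ σ : V → Tm F V, (r.rhs.subst σ).height ≤ (r.lhs.subst σ).height)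
    {s t : Tm F V} (h : Rew R s t) : t.height ≤ s.height := by
  obtain ⟨p, r, hr, σ, h1, h2⟩ := h
  exact height_repl p h1 h2 (hR r hr σ)

lemma rewAt_cons {R : Set (Rule F V)} {i : ℕ} {q : List ℕ} {s t : Tm F V}
    (h : RewAt R (i :: q) s t) :
    ∃ (f : F) (ts : List (Tm F V)) (u u' : Tm F V),
      s = Tm.app f ts ∧ ts[i]? = some u ∧ RewAt R q u u' ∧
      t = Tm.app f (ts.set i u') := by
  obtain ⟨r, hr, σ, h1, h2⟩ := h
  cases s with
  | var x => simp [Tm.subAt] at h1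
  | app f ts =>
    cases hg : ts[i]? with
    | none => simp [Tm.subAt, hg] at h1
    | some w =>
      simp only [Tm.subAt, hg] at h1
      simp only [Tm.replAt, hg, Option.map_eq_some_iff] at h2
      obtain ⟨w', hw', rfl⟩ := h2
      exact ⟨f, ts, w, w', rfl, by simpa using hg, ⟨r, hr, σ, h1, hw'⟩, rfl⟩
end Aux

/-- If every rule of `R` is height-preserving or height-decreasing under
every substitution and `R` is non-terminating, then there is an infinite `R`-derivation
with infinitely many rewrite steps at the root position. -/
theorem stmt19 {F V : Type} (R : Set (Rule F V))
    (hR : ∀ r ∈ R, ∀ σ : V → Tm F V, (r.rhs.subst σ).height ≤ (r.lhs.subst σ).height)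
    (hnt : ∃ f : ℕ → Tm F V, ∀ n, Rew R (f n) (f (n + 1))) :
    ∃ (f : ℕ → Tm F V) (pp : ℕ → List ℕ),
      (∀ n, RewAt R (pp n) (f n) (f (n + 1))) ∧ ∀ N, ∃ n ≥ N, pp n = [] := by
  classical
  have hP : ∃ h : ℕ, ∃ g : ℕ → Tm F V,
      (∀ n, Rew R (g n) (g (n + 1))) ∧ (g 0).height ≤ h := by
    obtain ⟨g, hg⟩ := hnt; exact ⟨(g 0).height, g, hg, le_rfl⟩
  set h0 := Nat.find hP with hh0
  obtain ⟨g, hg, hgh⟩ := Nat.find_spec hP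
  have hmono : ∀ n, (g n).height ≤ h0 := by
    intro n; induction n with
    | zero => exact hgh
    | succ n ih => exact le_trans (rew_height_le hR (hg n)) ih
  choose pp hpp using hg
  refine ⟨g, pp, hpp, ?_⟩
  by_contra hcon
  push_neg at hcon
  obtain ⟨N, hN⟩ := hcon
  have hiqex : ∀ n : ℕ, ∃ (i : ℕ) (q : List ℕ), pp (N + n) = i :: q := by
    intro n
    cases hq : pp (N + n) with
    | nil => exact absurd hq (hN (N + n) (Nat.le_add_right N n))
    | cons a l => exact ⟨a, l, rfl⟩
  choose i q hiq using hiqex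
  have hdec : ∀ n : ℕ, ∃ (f : F) (ts : List (Tm F V)) (u u' : Tm F V),
      g (N + n) = Tm.app f ts ∧ ts[i n]? = some u ∧ RewAt R (q n) u u' ∧
      g (N + n + 1) = Tm.app f (ts.set (i n) u') := by
    intro n
    have := hpp (N + n)
    rw [hiq n] at this
    exact rewAt_cons this
  choose fh ts u u' h1 h2 h3 h4 using hdec
  have hts : ∀ n, ts (n + 1) = (ts n).set (i n) (u' n) := by
    intro n
    have e1 : g (N + n + 1) = Tm.app (fh (n + 1)) (ts (n + 1)) := by
      have := h1 (n + 1); rwa [Nat.add_succ] at this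
    have := (h4 n).symm.trans e1
    injection this with _ hts'
    exact hts'.symm
  have hlen : ∀ n, (ts n).length = (ts 0).length := by
    intro n; induction n with
    | zero => rfl
    | succ n ih => rw [hts n, List.length_set]; exact ih
  set L := (ts 0).length with hL
  have hiL : ∀ n, i n < L := by
    intro n
    obtain ⟨h, -⟩ := List.getElem?_eq_some_iff.1 (h2 n)
    rw [← hlen n]; exact h
  obtain ⟨b, hb⟩ := Finite.exists_infinite_fiber (fun n => (⟨i n, hiL n⟩ : Fin L))
  have hS : {n : ℕ | i n = (b : ℕ)}.Infinite := by
    have hset : ((fun n => (⟨i n, hiL n⟩ : Fin L)) ⁻¹' {b}) = {n : ℕ | i n = (b : ℕ)} := by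
      ext n; simp [Fin.ext_iff]
    rw [← hset, ← Set.infinite_coe_iff]; exact hb
  have hnxt : ∀ n : ℕ, ∃ m, n ≤ m ∧ i m = (b : ℕ) := by
    intro n
    obtain ⟨m, hm, h⟩ := hS.exists_gt n
    exact ⟨m, h.le, hm⟩
  set nxt : ℕ → ℕ := fun n => Nat.find (hnxt n) with hnxtdef
  have hnxt_le : ∀ n, n ≤ nxt n := fun n => (Nat.find_spec (hnxt n)).1
  have hnxt_mem : ∀ n, i (nxt n) = (b : ℕ) := fun n => (Nat.find_spec (hnxt n)).2
  have hnxt_min : ∀ n m, n ≤ m → m < nxt n → i m ≠ (b : ℕ) := by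
    intro n m hnm hm hmem
    exact Nat.find_min (hnxt n) hm ⟨hnm, hmem⟩
  set A : ℕ → Tm F V := fun n => ((ts n)[(b : ℕ)]?).getD (g 0) with hA
  have hAget : ∀ n, (ts n)[(b : ℕ)]? = some (A n) := by
    intro n
    have hlt : (b : ℕ) < (ts n).length := by rw [hlen n]; exact b.2
    simp only [hA]
    rw [List.getElem?_eq_getElem hlt]
    rfl
  have hAmem : ∀ n, A n ∈ ts n := by
    intro n
    exact List.mem_of_getElem? (hAget n)
  have hAh : ∀ n, (A n).height < h0 := by
    intro n
    have := height_mem_lt (hAmem n) (fh n)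
    rw [← h1 n] at this
    exact lt_of_lt_of_le this (hmono (N + n))
  have hstep : ∀ n, i n = (b : ℕ) → Rew R (A n) (A (n + 1)) := by
    intro n hib
    have hu : A n = u n :=
      Option.some_injective _ ((hAget n).symm.trans (hib ▸ h2 n))
    have hu' : A (n + 1) = u' n := by
      have h' : (ts (n + 1))[(b : ℕ)]? = some (u' n) := by
        rw [hts n, hib, List.getElem?_set_self', hAget n]; rfl
      exact Option.some_injective _ ((hAget (n + 1)).symm.trans h')
    rw [hu, hu']
    exact ⟨q n, h3 n⟩
  have hconst : ∀ n, i n ≠ (b : ℕ) → A (n + 1) = A n := by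
    intro n hib
    have h' : (ts (n + 1))[(b : ℕ)]? = (ts n)[(b : ℕ)]? := by
      rw [hts n]; exact List.getElem?_set_ne hib
    exact Option.some_injective _ ((hAget (n + 1)).symm.trans (h'.trans (hAget n)))
  have hAconst : ∀ (d a : ℕ), (∀ m, a ≤ m → m < a + d → i m ≠ (b : ℕ)) →
      A (a + d) = A a := by
    intro d
    induction d with
    | zero => intro a _; rfl
    | succ d ih =>
      intro a hm
      have : A (a + d + 1) = A (a + d) := hconst (a + d) (hm (a + d) (Nat.le_add_right a d) (by omega))
      rw [show a + (d+1) = a + d + 1 from rfl, this]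
      exact ih a (fun m h1 h2 => hm m h1 (by omega))
  set e : ℕ → ℕ := fun k => Nat.rec (nxt 0) (fun _ prev => nxt (prev + 1)) k with he
  have he0 : e 0 = nxt 0 := rfl
  have heS : ∀ k, e (k + 1) = nxt (e k + 1) := fun _ => rfl
  have hemem : ∀ k, i (e k) = (b : ℕ) := by
    intro k; cases k with
    | zero => exact hnxt_mem 0
    | succ k => exact hnxt_mem (e k + 1)
  have hBstep : ∀ k, Rew R (A (e k)) (A (e (k + 1))) := by
    intro k
    have hle : e k + 1 ≤ e (k + 1) := hnxt_le (e k + 1)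
    have heq : A (e (k + 1)) = A (e k + 1) := by
      have := hAconst (e (k + 1) - (e k + 1)) (e k + 1)
        (fun m hm1 hm2 => hnxt_min (e k + 1) m hm1 (by rw [← heS k]; omega))
      rwa [show e k + 1 + (e (k + 1) - (e k + 1)) = e (k + 1) by omega] at this
    rw [heq]
    exact hstep (e k) (hemem k)
  have hPlt : ∃ gg : ℕ → Tm F V, (∀ n, Rew R (gg n) (gg (n + 1))) ∧
      (gg 0).height ≤ (A (e 0)).height := ⟨fun k => A (e k), hBstep, le_rfl⟩
  have hlt : (A (e 0)).height < h0 := hAh (e 0)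
  exact Nat.find_min hP hlt hPlt
end
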